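/- arXiv:0707.3426 — 5 statements merged into one kernel-verified Lean document; each statement's English description precedes it below -/
import Mathlib

section
/- Let n ≥ 1, let b : 𝔹ⁿ → 𝔹ⁿ be a holomorphic map of the open unit ball into itself, and let α ≥ 1 be a real number. If the kernel K^{b,α}(z,w) = ((1 − ⟨b(z), b(w)⟩)/(1 − ⟨z,w⟩))^α (principal branch) is positive semidefinite on 𝔹ⁿ, then the kernel (z,w) ↦ (1 − ⟨b(z), b(w)⟩) · (1 − ⟨z,w⟩)^{−α} is positive semidefinite on 𝔹ⁿ. (This is the first assertion of the ball lemma: each coordinate function b_i is a contractive multiplier of H²_{n,α}; equivalently the tuple of multiplication operators (M_{b_1},…,M_{b_n}) is a row contraction.) -/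
open Complex Metric ComplexConjugate
open scoped ComplexOrder

noncomputable section

/-- A kernel `K : X → X → ℂ` is positive semidefinite on a set `S`: for all finite
families of points of `S` and scalars, the associated quadratic form is a
nonnegative real number (using the partial order on `ℂ`). -/
def IsPSDKernelOn {X : Type*} (K : X → X → ℂ) (S : Set X) : Prop :=
  ∀ (n : ℕ) (x : Fin n → X), (∀ i, x i ∈ S) → ∀ c : Fin n → ℂ,
    0 ≤ ∑ i, ∑ j, c i * conj (c j) * K (x i) (x j)
namespace BallLemmaAux

variable {X : Type*}

/-- A kernel with an explicit finite Gram decomposition. -/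
def IsGramK (K : X → X → ℂ) : Prop :=
  ∃ (ι : Type) (s : Finset ι) (g : ι → X → ℂ),
    ∀ z w, K z w = ∑ t ∈ s, g t z * conj (g t w)

lemma gram_congr {K K' : X → X → ℂ} (h : ∀ z w, K' z w = K z w) (hK : IsGramK K) :
    IsGramK K' := by
  obtain ⟨ι, s, g, hg⟩ := hK
  exact ⟨ι, s, g, fun z w => (h z w).trans (hg z w)⟩

lemma gram_zero : IsGramK (fun _ _ : X => (0 : ℂ)) :=
  ⟨Unit, ∅, fun _ _ => 0, by simp⟩

lemma gram_one : IsGramK (fun _ _ : X => (1 : ℂ)) :=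
  ⟨Unit, {Unit.unit}, fun _ _ => 1, by simp⟩

lemma gram_add {K₁ K₂ : X → X → ℂ} (h₁ : IsGramK K₁) (h₂ : IsGramK K₂) :
    IsGramK (fun z w => K₁ z w + K₂ z w) := by
  obtain ⟨ι₁, s₁, g₁, hg₁⟩ := h₁
  obtain ⟨ι₂, s₂, g₂, hg₂⟩ := h₂
  refine ⟨ι₁ ⊕ ι₂, s₁.disjSum s₂, Sum.elim g₁ g₂, fun z w => ?_⟩
  show K₁ z w + K₂ z w = _
  rw [Finset.sum_disjSum, hg₁, hg₂]
  simp

lemma gram_mul {K₁ K₂ : X → X → ℂ} (h₁ : IsGramK K₁) (h₂ : IsGramK K₂) :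
    IsGramK (fun z w => K₁ z w * K₂ z w) := by
  obtain ⟨ι₁, s₁, g₁, hg₁⟩ := h₁
  obtain ⟨ι₂, s₂, g₂, hg₂⟩ := h₂
  refine ⟨ι₁ × ι₂, s₁ ×ˢ s₂, fun t z => g₁ t.1 z * g₂ t.2 z, fun z w => ?_⟩
  show K₁ z w * K₂ z w = _
  rw [hg₁, hg₂, Finset.sum_mul_sum, Finset.sum_product]
  refine Finset.sum_congr rfl fun i _ => Finset.sum_congr rfl fun j _ => ?_
  simp only [map_mul]; ring

lemma gram_smul (r : ℝ) (hr : 0 ≤ r) {K : X → X → ℂ} (hK : IsGramK K) :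
    IsGramK (fun z w => (r : ℂ) * K z w) := by
  obtain ⟨ι, s, g, hg⟩ := hK
  refine ⟨ι, s, fun t z => (Real.sqrt r : ℂ) * g t z, fun z w => ?_⟩
  show (r : ℂ) * K z w = _
  rw [hg, Finset.mul_sum]
  refine Finset.sum_congr rfl fun t _ => ?_
  have h2 : ((Real.sqrt r : ℂ)) * (Real.sqrt r : ℂ) = (r : ℂ) := by
    rw [← Complex.ofReal_mul, Real.mul_self_sqrt hr]
  rw [map_mul, Complex.conj_ofReal, ← h2]
  ring

lemma gram_pow (k : ℕ) {K : X → X → ℂ} (hK : IsGramK K) :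
    IsGramK (fun z w => (K z w) ^ k) := by
  induction k with
  | zero => exact gram_congr (by simp) gram_one
  | succ k ih => exact gram_congr (fun z w => by rw [pow_succ]) (gram_mul ih hK)

lemma gram_sum_range (m : ℕ) (K : ℕ → X → X → ℂ) (h : ∀ k, IsGramK (K k)) :
    IsGramK (fun z w => ∑ k ∈ Finset.range m, K k z w) := by
  induction m with
  | zero => exact gram_congr (by simp) gram_zero
  | succ m ih =>
      exact gram_congr (fun z w => by rw [Finset.sum_range_succ]) (gram_add ih (h m))

lemma psd_mul_gram {K G : X → X → ℂ} {S : Set X} (hK : IsPSDKernelOn K S)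
    (hG : IsGramK G) : IsPSDKernelOn (fun z w => K z w * G z w) S := by
  obtain ⟨ι, s, g, hg⟩ := hG
  intro N x hx c
  show 0 ≤ ∑ i, ∑ j, c i * conj (c j) * (K (x i) (x j) * G (x i) (x j))
  have hterm : ∀ i j : Fin N, c i * conj (c j) * (K (x i) (x j) * G (x i) (x j))
      = ∑ t ∈ s, (c i * g t (x i)) * conj (c j * g t (x j)) * K (x i) (x j) := by
    intro i j
    rw [hg]
    simp only [Finset.mul_sum]
    refine Finset.sum_congr rfl fun t _ => ?_
    simp only [map_mul]; ring
  have h1 : ∀ i : Fin N,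
      (∑ j, ∑ t ∈ s, (c i * g t (x i)) * conj (c j * g t (x j)) * K (x i) (x j))
      = ∑ t ∈ s, ∑ j, (c i * g t (x i)) * conj (c j * g t (x j)) * K (x i) (x j) :=
    fun i => Finset.sum_comm
  have hswap : (∑ i, ∑ j, c i * conj (c j) * (K (x i) (x j) * G (x i) (x j)))
      = ∑ t ∈ s, ∑ i, ∑ j, (c i * g t (x i)) * conj (c j * g t (x j)) * K (x i) (x j) := by
    simp only [hterm, h1]
    exact Finset.sum_comm
  rw [hswap]
  exact Finset.sum_nonneg fun t _ => hK N x hx (fun i => c i * g t (x i))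

lemma psd_congr {K K' : X → X → ℂ} {S : Set X}
    (h : ∀ z ∈ S, ∀ w ∈ S, K z w = K' z w) (hK : IsPSDKernelOn K S) :
    IsPSDKernelOn K' S := by
  intro N x hx c
  have heq : ∑ i, ∑ j, c i * conj (c j) * K' (x i) (x j)
      = ∑ i, ∑ j, c i * conj (c j) * K (x i) (x j) := by
    refine Finset.sum_congr rfl fun i _ => Finset.sum_congr rfl fun j _ => ?_
    rw [h (x i) (hx i) (x j) (hx j)]
  show 0 ≤ ∑ i, ∑ j, c i * conj (c j) * K' (x i) (x j)
  rw [heq]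
  exact hK N x hx c

lemma psd_lim {K : ℕ → X → X → ℂ} {L : X → X → ℂ} {S : Set X}
    (hK : ∀ m, IsPSDKernelOn (K m) S)
    (hlim : ∀ z ∈ S, ∀ w ∈ S,
      Filter.Tendsto (fun m => K m z w) Filter.atTop (nhds (L z w))) :
    IsPSDKernelOn L S := by
  intro N x hx c
  have hclosed : IsClosed {z : ℂ | 0 ≤ z} := by
    have hset : {z : ℂ | 0 ≤ z} = Complex.re ⁻¹' Set.Ici 0 ∩ Complex.im ⁻¹' {0} := by
      ext z
      simp only [Set.mem_setOf_eq, Set.mem_inter_iff, Set.mem_preimage, Set.mem_Ici,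
        Set.mem_singleton_iff, Complex.le_def, Complex.zero_re, Complex.zero_im]
      exact and_congr_right fun _ => eq_comm
    rw [hset]
    exact (isClosed_Ici.preimage Complex.continuous_re).inter
      (isClosed_singleton.preimage Complex.continuous_im)
  have ht : Filter.Tendsto (fun m => ∑ i, ∑ j, c i * conj (c j) * K m (x i) (x j))
      Filter.atTop (nhds (∑ i, ∑ j, c i * conj (c j) * L (x i) (x j))) := by
    refine tendsto_finset_sum _ fun i _ => tendsto_finset_sum _ fun j _ => ?_
    exact (hlim (x i) (hx i) (x j) (hx j)).const_mul _
  exact hclosed.mem_of_tendsto ht (Filter.Eventually.of_forall fun m => hK m N x hx c)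

lemma norm_herm_sum_lt {n : ℕ} {u v : EuclideanSpace ℂ (Fin n)}
    (hu : ‖u‖ < 1) (hv : ‖v‖ < 1) : ‖∑ i, u i * conj (v i)‖ < 1 := by
  have hin : (∑ i, u i * conj (v i)) = inner ℂ v u := by
    rw [PiLp.inner_apply]
    exact Finset.sum_congr rfl fun i _ => by
      rw [RCLike.inner_apply]
  rw [hin]
  calc ‖(inner ℂ v u : ℂ)‖ ≤ ‖v‖ * ‖u‖ := norm_inner_le_norm v u
    _ < 1 := by nlinarith [norm_nonneg v, norm_nonneg u]

lemma re_pos_of_norm_lt {u : ℂ} (hu : ‖u‖ < 1) : 0 < (1 - u).re := by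
  have := Complex.abs_re_le_norm u
  simp only [Complex.sub_re, Complex.one_re]
  have := abs_le.mp this
  linarith [this.2]

lemma key_id {f g : ℂ} (hf : 0 < f.re) (hg : 0 < g.re) (α : ℝ) :
    f * g ^ (-(α : ℂ)) = (f / g) ^ (α : ℂ) * Complex.exp (((α : ℂ) - 1) * (-Complex.log f)) := by
  have hf0 : f ≠ 0 := by intro h; rw [h] at hf; simp at hf
  have hg0 : g ≠ 0 := by intro h; rw [h] at hg; simp at hg
  have haf := abs_lt.mp (Complex.abs_arg_lt_pi_div_two_iff.mpr (Or.inl hf))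
  have hag := abs_lt.mp (Complex.abs_arg_lt_pi_div_two_iff.mpr (Or.inl hg))
  have hπ := Real.pi_pos
  have hlog : Complex.log (f / g) = Complex.log f - Complex.log g := by
    have he : f / g = Complex.exp (Complex.log f - Complex.log g) := by
      rw [Complex.exp_sub, Complex.exp_log hf0, Complex.exp_log hg0]
    rw [he, Complex.log_exp]
    · simp only [Complex.sub_im, Complex.log_im]
      linarith [haf.1, hag.2]
    · simp only [Complex.sub_im, Complex.log_im]
      linarith [haf.2, hag.1]
  rw [Complex.cpow_def_of_ne_zero (div_ne_zero hf0 hg0), Complex.cpow_def_of_ne_zero hg0, hlog,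
    ← Complex.exp_add]
  conv_lhs => rw [← Complex.exp_log hf0]
  rw [← Complex.exp_add]
  congr 1
  ring

end BallLemmaAux

open BallLemmaAux in
/-- First assertion of the ball lemma: if `K^{b,α}(z,w) = ((1 − ⟨b z, b w⟩)/(1 − ⟨z,w⟩))^α`
is positive semidefinite, then the kernel `(1 − ⟨b z, b w⟩)·(1 − ⟨z,w⟩)^{−α}` is
positive semidefinite (i.e. the tuple `(M_{b_1},…,M_{b_n})` is a row contraction
on `H²_{n,α}`). -/
theorem ball_coordinates_row_contraction
    (n : ℕ) (hn : 1 ≤ n)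
    (b : EuclideanSpace ℂ (Fin n) → EuclideanSpace ℂ (Fin n))
    (hb_holo : DifferentiableOn ℂ b (ball (0 : EuclideanSpace ℂ (Fin n)) 1))
    (hb_maps : ∀ z ∈ ball (0 : EuclideanSpace ℂ (Fin n)) 1,
      b z ∈ ball (0 : EuclideanSpace ℂ (Fin n)) 1)
    (α : ℝ) (hα : 1 ≤ α)
    (hpos : IsPSDKernelOn
      (fun z w => ((1 - ∑ i, b z i * conj (b w i)) / (1 - ∑ i, z i * conj (w i))) ^ (α : ℂ))
      (ball (0 : EuclideanSpace ℂ (Fin n)) 1)) :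
    IsPSDKernelOn
      (fun z w => (1 - ∑ i, b z i * conj (b w i)) * (1 - ∑ i, z i * conj (w i)) ^ (-(α : ℂ)))
      (ball (0 : EuclideanSpace ℂ (Fin n)) 1) := by
  have hS : ∀ z ∈ ball (0 : EuclideanSpace ℂ (Fin n)) 1,
      ∀ w ∈ ball (0 : EuclideanSpace ℂ (Fin n)) 1,
      ‖∑ i, b z i * conj (b w i)‖ < 1 := fun z hz w hw =>
    norm_herm_sum_lt (mem_ball_zero_iff.mp (hb_maps z hz)) (mem_ball_zero_iff.mp (hb_maps w hw))
  have hSG : ∀ z ∈ ball (0 : EuclideanSpace ℂ (Fin n)) 1,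
      ∀ w ∈ ball (0 : EuclideanSpace ℂ (Fin n)) 1,
      ‖∑ i, z i * conj (w i)‖ < 1 := fun z hz w hw =>
    norm_herm_sum_lt (mem_ball_zero_iff.mp hz) (mem_ball_zero_iff.mp hw)
  set β : ℝ := α - 1 with hβdef
  have hβ0 : 0 ≤ β := by simp only [hβdef]; linarith
  have hgF : IsGramK (fun z w : EuclideanSpace ℂ (Fin n) => ∑ i, b z i * conj (b w i)) :=
    ⟨Fin n, Finset.univ, fun i z => b z i, fun _ _ => rfl⟩
  have hgL : ∀ m, IsGramK (fun z w : EuclideanSpace ℂ (Fin n) =>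
      ∑ k ∈ Finset.range m, (∑ i, b z i * conj (b w i)) ^ k / (k : ℂ)) := by
    intro m
    refine gram_sum_range m _ fun k => ?_
    refine gram_congr (fun z w => ?_)
      (gram_smul ((k : ℝ)⁻¹) (by positivity) (gram_pow k hgF))
    push_cast
    ring
  have hgE : ∀ p m, IsGramK (fun z w : EuclideanSpace ℂ (Fin n) =>
      ∑ q ∈ Finset.range p,
        ((β : ℂ) * ∑ k ∈ Finset.range m, (∑ i, b z i * conj (b w i)) ^ k / (k : ℂ)) ^ q
          / (q.factorial : ℂ)) := by
    intro p m
    refine gram_sum_range p _ fun q => ?_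
    refine gram_congr (fun z w => ?_)
      (gram_smul (β ^ q / q.factorial) (by positivity) (gram_pow q (hgL m)))
    push_cast
    ring
  have step1 : ∀ p m, IsPSDKernelOn (fun z w : EuclideanSpace ℂ (Fin n) =>
      ((1 - ∑ i, b z i * conj (b w i)) / (1 - ∑ i, z i * conj (w i))) ^ (α : ℂ) *
      ∑ q ∈ Finset.range p,
        ((β : ℂ) * ∑ k ∈ Finset.range m, (∑ i, b z i * conj (b w i)) ^ k / (k : ℂ)) ^ q
          / (q.factorial : ℂ))
      (ball (0 : EuclideanSpace ℂ (Fin n)) 1) :=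
    fun p m => psd_mul_gram hpos (hgE p m)
  have step2 : ∀ p, IsPSDKernelOn (fun z w : EuclideanSpace ℂ (Fin n) =>
      ((1 - ∑ i, b z i * conj (b w i)) / (1 - ∑ i, z i * conj (w i))) ^ (α : ℂ) *
      ∑ q ∈ Finset.range p,
        ((β : ℂ) * -Complex.log (1 - ∑ i, b z i * conj (b w i))) ^ q / (q.factorial : ℂ))
      (ball (0 : EuclideanSpace ℂ (Fin n)) 1) := by
    intro p
    refine psd_lim (fun m => step1 p m) ?_
    intro z hz w hw
    have hlog := (Complex.hasSum_taylorSeries_neg_log (hS z hz w hw)).tendsto_sum_nat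
    exact Filter.Tendsto.const_mul _ (tendsto_finset_sum _ fun q _ =>
      ((hlog.const_mul ((β : ℂ))).pow q).div_const _)
  have step3 : IsPSDKernelOn (fun z w : EuclideanSpace ℂ (Fin n) =>
      ((1 - ∑ i, b z i * conj (b w i)) / (1 - ∑ i, z i * conj (w i))) ^ (α : ℂ) *
      Complex.exp ((β : ℂ) * -Complex.log (1 - ∑ i, b z i * conj (b w i))))
      (ball (0 : EuclideanSpace ℂ (Fin n)) 1) := by
    refine psd_lim (fun p => step2 p) ?_
    intro z hz w hw
    have he := (NormedSpace.expSeries_div_hasSum_exp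
      ((β : ℂ) * -Complex.log (1 - ∑ i, b z i * conj (b w i)))).tendsto_sum_nat
    rw [← Complex.exp_eq_exp_ℂ] at he
    exact he.const_mul _
  refine psd_congr (fun z hz w hw => ?_) step3
  have hf := re_pos_of_norm_lt (hS z hz w hw)
  have hg := re_pos_of_norm_lt (hSG z hz w hw)
  have hkey := key_id hf hg α
  have hc : ((β : ℝ) : ℂ) = (α : ℂ) - 1 := by rw [hβdef]; push_cast; ring
  show ((1 - ∑ i, b z i * conj (b w i)) / (1 - ∑ i, z i * conj (w i))) ^ (α : ℂ) *
      Complex.exp ((β : ℂ) * -Complex.log (1 - ∑ i, b z i * conj (b w i)))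
    = (1 - ∑ i, b z i * conj (b w i)) * (1 - ∑ i, z i * conj (w i)) ^ (-(α : ℂ))
  rw [hkey, hc]
end
end

section
/- Let n ≥ 1, let b : 𝔹ⁿ → 𝔹ⁿ be a holomorphic map of the open unit ball into itself, let α ≥ 1 be a real number, and suppose the kernel K^{b,α}(z,w) = ((1 − ⟨b(z), b(w)⟩)/(1 − ⟨z,w⟩))^α (principal branch) is positive semidefinite on 𝔹ⁿ. Then for every c ∈ ℂⁿ, the kernel (z,w) ↦ (|c|² − ⟨b(z), c⟩ · conj(⟨b(w), c⟩)) · (1 − ⟨z,w⟩)^{−α} is positive semidefinite on 𝔹ⁿ, where |c|² = ∑_{i=1}^n |c_i|². (This expresses the operator bound ‖∑_{i=1}^n conj(c_i) M_{b_i}‖ ≤ |c| on H²_{n,α}.) -/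
open Complex Metric ComplexConjugate
open scoped ComplexOrder

noncomputable section

namespace BallRowAux

lemma conj_eq_of_nonneg {z : ℂ} (h : 0 ≤ z) : conj z = z := by
  have him : z.im = 0 := by
    have := (Complex.le_def.mp h).2
    simpa using this.symm
  exact Complex.conj_eq_iff_im.mpr him

/-- Gram decomposition of a matrix with nonnegative quadratic form. -/
lemma exists_decomp {m : ℕ} (A : Matrix (Fin m) (Fin m) ℂ)
    (h : ∀ a : Fin m → ℂ, 0 ≤ ∑ i, ∑ j, a i * conj (a j) * A i j) :
    ∃ B : Matrix (Fin m) (Fin m) ℂ, ∀ i j, A i j = ∑ k, conj (B k i) * B k j := by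
  have hform : ∀ y : Fin m → ℂ, 0 ≤ ∑ i, ∑ j, conj (y i) * y j * A i j := by
    intro y
    simpa using h (fun i => conj (y i))
  have hherm : A.IsHermitian := by
    rw [Matrix.isHermitian_iff_isSymmetric, LinearMap.isSymmetric_iff_inner_map_self_real]
    intro v
    have hQ : (inner ℂ (Matrix.toEuclideanLin A v) v : ℂ)
        = conj (∑ i, ∑ j, conj (v i) * v j * A i j) := by
      rw [Matrix.toEuclideanLin_apply]
      simp only [PiLp.inner_apply, RCLike.inner_apply,
        Matrix.mulVec, dotProduct, map_sum, map_mul, conj_conj]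
      refine Finset.sum_congr rfl fun i _ => ?_
      rw [Finset.mul_sum]
      refine Finset.sum_congr rfl fun j _ => by ring
    rw [hQ, conj_conj, conj_eq_of_nonneg (hform fun i => v i)]
  have hpsd : A.PosSemidef := by
    refine Matrix.PosSemidef.of_dotProduct_mulVec_nonneg hherm fun x => ?_
    have e : dotProduct (star x) (A.mulVec x)
        = ∑ i, ∑ j, conj (x i) * x j * A i j := by
      simp only [dotProduct, Matrix.mulVec, Pi.star_apply, RCLike.star_def,
        Finset.mul_sum]
      refine Finset.sum_congr rfl fun i _ => Finset.sum_congr rfl fun j _ => by ring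
    rw [e]
    exact hform x
  obtain ⟨B, hB⟩ : ∃ B : Matrix (Fin m) (Fin m) ℂ, A = star B * B := by
    open scoped MatrixOrder Matrix.Norms.L2Operator in
    exact CStarAlgebra.nonneg_iff_eq_star_mul_self.mp hpsd.nonneg
  refine ⟨B, fun i j => ?_⟩
  rw [hB]
  simp [Matrix.mul_apply, Matrix.conjTranspose_apply]

variable {X : Type*} {S : Set X}

lemma psd_congr {K K' : X → X → ℂ} (h : IsPSDKernelOn K S)
    (he : ∀ z ∈ S, ∀ w ∈ S, K z w = K' z w) : IsPSDKernelOn K' S := by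
  intro m x hx a
  have e : ∑ i, ∑ j, a i * conj (a j) * K' (x i) (x j)
      = ∑ i, ∑ j, a i * conj (a j) * K (x i) (x j) :=
    Finset.sum_congr rfl fun i _ => Finset.sum_congr rfl fun j _ => by
      rw [he _ (hx i) _ (hx j)]
  rw [e]; exact h m x hx a

lemma psd_comp {Y : Type*} {S' : Set Y} {K : X → X → ℂ} (f : Y → X)
    (h : IsPSDKernelOn K S) (hf : ∀ z ∈ S', f z ∈ S) :
    IsPSDKernelOn (fun z w => K (f z) (f w)) S' :=
  fun m x hx a => h m (fun i => f (x i)) (fun i => hf _ (hx i)) a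

lemma psd_mul {K1 K2 : X → X → ℂ} (h1 : IsPSDKernelOn K1 S) (h2 : IsPSDKernelOn K2 S) :
    IsPSDKernelOn (fun z w => K1 z w * K2 z w) S := by
  intro m x hx a
  obtain ⟨B, hB⟩ := exists_decomp (Matrix.of fun i j => K1 (x i) (x j))
    (fun d => h1 m x hx d)
  have key : ∑ i, ∑ j, a i * conj (a j) * (K1 (x i) (x j) * K2 (x i) (x j))
      = ∑ k, ∑ i, ∑ j,
          (a i * conj (B k i)) * conj (a j * conj (B k j)) * K2 (x i) (x j) := by
    have e1 : ∀ i j, a i * conj (a j) * (K1 (x i) (x j) * K2 (x i) (x j))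
        = ∑ k, (a i * conj (B k i)) * conj (a j * conj (B k j)) * K2 (x i) (x j) := by
      intro i j
      have := hB i j
      simp only [Matrix.of_apply] at this
      rw [this, Finset.sum_mul, Finset.mul_sum]
      refine Finset.sum_congr rfl fun k _ => ?_
      simp only [map_mul, conj_conj]
      ring
    simp only [e1]
    calc ∑ i, ∑ j, ∑ k, (a i * conj (B k i)) * conj (a j * conj (B k j)) * K2 (x i) (x j)
        = ∑ i, ∑ k, ∑ j, (a i * conj (B k i)) * conj (a j * conj (B k j)) * K2 (x i) (x j) :=
          Finset.sum_congr rfl fun i _ => Finset.sum_comm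
      _ = ∑ k, ∑ i, ∑ j, (a i * conj (B k i)) * conj (a j * conj (B k j)) * K2 (x i) (x j) :=
          Finset.sum_comm
  rw [key]
  exact Finset.sum_nonneg fun k _ => h2 m x hx _

lemma psd_gram (f : X → ℂ) : IsPSDKernelOn (fun z w => f z * conj (f w)) S := by
  intro m x hx a
  have e : ∑ i, ∑ j, a i * conj (a j) * (f (x i) * conj (f (x j)))
      = (∑ i, a i * f (x i)) * conj (∑ i, a i * f (x i)) := by
    rw [map_sum, Finset.sum_mul_sum]
    refine Finset.sum_congr rfl fun i _ => Finset.sum_congr rfl fun j _ => by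
      simp only [map_mul]; ring
  rw [e, Complex.mul_conj]
  exact Complex.zero_le_real.mpr (Complex.normSq_nonneg _)

lemma psd_const {r : ℝ} (hr : 0 ≤ r) : IsPSDKernelOn (fun _ _ => (r : ℂ)) S := by
  have h := psd_gram (S := S) (fun _ : X => (Real.sqrt r : ℂ))
  refine psd_congr h fun z _ w _ => ?_
  rw [Complex.conj_ofReal, ← Complex.ofReal_mul, Real.mul_self_sqrt hr]

lemma psd_smul {K : X → X → ℂ} {r : ℝ} (hr : 0 ≤ r) (h : IsPSDKernelOn K S) :
    IsPSDKernelOn (fun z w => (r : ℂ) * K z w) S := by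
  have := psd_mul (psd_const (S := S) hr) h
  exact this

lemma psd_add {K1 K2 : X → X → ℂ} (h1 : IsPSDKernelOn K1 S) (h2 : IsPSDKernelOn K2 S) :
    IsPSDKernelOn (fun z w => K1 z w + K2 z w) S := by
  intro m x hx a
  have e : ∑ i, ∑ j, a i * conj (a j) * (K1 (x i) (x j) + K2 (x i) (x j))
      = (∑ i, ∑ j, a i * conj (a j) * K1 (x i) (x j))
        + ∑ i, ∑ j, a i * conj (a j) * K2 (x i) (x j) := by
    rw [← Finset.sum_add_distrib]
    refine Finset.sum_congr rfl fun i _ => ?_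
    rw [← Finset.sum_add_distrib]
    exact Finset.sum_congr rfl fun j _ => by ring
  rw [e]
  exact add_nonneg (h1 m x hx a) (h2 m x hx a)

lemma psd_pow {K : X → X → ℂ} (h : IsPSDKernelOn K S) (k : ℕ) :
    IsPSDKernelOn (fun z w => K z w ^ k) S := by
  induction k with
  | zero =>
      refine psd_congr (psd_const (S := S) (r := 1) zero_le_one) fun z _ w _ => by simp
  | succ k ih =>
      refine psd_congr (psd_mul ih h) fun z _ w _ => by rw [← pow_succ]

lemma psd_tsum {K : ℕ → X → X → ℂ} (h : ∀ k, IsPSDKernelOn (K k) S)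
    (hs : ∀ z ∈ S, ∀ w ∈ S, Summable fun k => K k z w) :
    IsPSDKernelOn (fun z w => ∑' k, K k z w) S := by
  letI := Complex.orderClosedTopology
  intro m x hx a
  have hsum : ∀ i j : Fin m, Summable fun k => a i * conj (a j) * K k (x i) (x j) :=
    fun i j => (hs _ (hx i) _ (hx j)).mul_left _
  have e : ∑ i, ∑ j, a i * conj (a j) * (∑' k, K k (x i) (x j))
      = ∑' k, ∑ i, ∑ j, a i * conj (a j) * K k (x i) (x j) := by
    have e1 : ∀ i : Fin m, ∑ j, a i * conj (a j) * (∑' k, K k (x i) (x j))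
        = ∑' k, ∑ j, a i * conj (a j) * K k (x i) (x j) := by
      intro i
      rw [Summable.tsum_finsetSum (fun j _ => hsum i j)]
      exact Finset.sum_congr rfl fun j _ => (tsum_mul_left).symm
    simp only [e1]
    have hs2 : ∀ i : Fin m, Summable fun k => ∑ j, a i * conj (a j) * K k (x i) (x j) :=
      fun i => summable_sum (fun j _ => hsum i j)
    rw [Summable.tsum_finsetSum (fun i _ => hs2 i)]
  rw [e]
  exact tsum_nonneg fun k => h k m x hx a

/-- `(x*y)^s = x^s * y^s` for `x, y` in the open right half-plane. -/
lemma mul_cpow_of_pos_re {x y : ℂ} (hx : 0 < x.re) (hy : 0 < y.re) (s : ℂ) :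
    (x * y) ^ s = x ^ s * y ^ s := by
  have hx0 : x ≠ 0 := fun h => by simp [h] at hx
  have hy0 : y ≠ 0 := fun h => by simp [h] at hy
  have hax : |x.arg| < Real.pi / 2 := Complex.abs_arg_lt_pi_div_two_iff.mpr (Or.inl hx)
  have hay : |y.arg| < Real.pi / 2 := Complex.abs_arg_lt_pi_div_two_iff.mpr (Or.inl hy)
  have harg : x.arg + y.arg ∈ Set.Ioc (-Real.pi) Real.pi := by
    have h1 := abs_lt.mp hax
    have h2 := abs_lt.mp hay
    have hpi := Real.pi_pos
    constructor
    · linarith [h1.1, h2.1]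
    · linarith [h1.2, h2.2]
  rw [Complex.cpow_def_of_ne_zero (mul_ne_zero hx0 hy0),
    Complex.log_mul hx0 hy0 harg, add_mul, Complex.exp_add,
    ← Complex.cpow_def_of_ne_zero hx0, ← Complex.cpow_def_of_ne_zero hy0]

lemma cpow_cancel {A B : ℂ} (hA : 0 < A.re) (hB : 0 < B.re) (s : ℂ) :
    A ^ (-s) * (A / B) ^ s = B ^ (-s) := by
  have hA0 : A ≠ 0 := fun h => by simp [h] at hA
  have hB0 : B ≠ 0 := fun h => by simp [h] at hB
  have hBinv : 0 < (B⁻¹).re := by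
    rw [Complex.inv_re]
    exact div_pos hB (Complex.normSq_pos.mpr hB0)
  have hargB : B.arg ≠ Real.pi := by
    have habs := Complex.abs_arg_lt_pi_div_two_iff.mpr (Or.inl hB)
    intro h
    rw [h] at habs
    have h2 := (abs_lt.mp habs).2
    linarith [Real.pi_pos]
  rw [div_eq_mul_inv, mul_cpow_of_pos_re hA hBinv s, Complex.inv_cpow _ _ hargB,
    Complex.cpow_neg, ← mul_assoc, Complex.cpow_neg,
    inv_mul_cancel₀ (by simp [Complex.cpow_eq_zero_iff, hA0]), one_mul, ← Complex.cpow_neg]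

end BallRowAux

open BallRowAux

section BallKernels

variable {n : ℕ}

local notation "E" => EuclideanSpace ℂ (Fin n)

/-- abbreviation for the sesquilinear pairing. -/
private def tk (z w : E) : ℂ := ∑ i, z i * conj (w i)

lemma tk_eq_inner (z w : E) : tk z w = (inner ℂ w z : ℂ) := by
  rw [PiLp.inner_apply]
  exact Finset.sum_congr rfl fun i _ => by rw [RCLike.inner_apply] <;> ring

lemma tk_norm_lt {z w : E} (hz : z ∈ ball (0 : E) 1) (hw : w ∈ ball (0 : E) 1) :
    ‖tk z w‖ < 1 := by
  rw [mem_ball_zero_iff] at hz hw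
  rw [tk_eq_inner]
  calc ‖(inner ℂ w z : ℂ)‖ ≤ ‖w‖ * ‖z‖ := norm_inner_le_norm w z
    _ < 1 := by nlinarith [norm_nonneg w, norm_nonneg z]

lemma tk_re_pos {z w : E} (hz : z ∈ ball (0 : E) 1) (hw : w ∈ ball (0 : E) 1) :
    0 < (1 - tk z w).re := by
  have h1 : (tk z w).re ≤ ‖tk z w‖ := by
    exact Complex.re_le_norm _
  have h2 := tk_norm_lt hz hw
  simp only [Complex.sub_re, Complex.one_re]
  linarith

lemma tk_ne_one {z w : E} (hz : z ∈ ball (0 : E) 1) (hw : w ∈ ball (0 : E) 1) :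
    (1 : ℂ) - tk z w ≠ 0 := by
  intro h
  have := tk_re_pos hz hw
  rw [h] at this
  simp at this

lemma psd_tk : IsPSDKernelOn (fun z w : E => tk z w) (ball (0 : E) 1) := by
  have h : ∀ s : Finset (Fin n), IsPSDKernelOn
      (fun z w : E => ∑ i ∈ s, z i * conj (w i)) (ball (0 : E) 1) := by
    intro s
    induction s using Finset.cons_induction with
    | empty => refine psd_congr (psd_const (r := 0) le_rfl) fun z _ w _ => by simp
    | cons a s ha ih =>
        have := psd_add (psd_gram (S := ball (0 : E) 1) (fun z : E => z a)) ih
        refine psd_congr this fun z _ w _ => by rw [Finset.sum_cons]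
  exact h Finset.univ

lemma psd_tk_pow (k : ℕ) :
    IsPSDKernelOn (fun z w : E => tk z w ^ k) (ball (0 : E) 1) := psd_pow psd_tk k

/-- Geometric series: `(1 - tk z w)⁻¹` is PSD on the ball. -/
lemma psd_geo : IsPSDKernelOn (fun z w : E => (1 - tk z w)⁻¹) (ball (0 : E) 1) := by
  refine psd_congr (psd_tsum (fun k => psd_tk_pow k) ?_) ?_
  · intro z hz w hw
    exact summable_geometric_of_norm_lt_one (tk_norm_lt hz hw)
  · intro z hz w hw
    exact tsum_geometric_of_norm_lt_one (tk_norm_lt hz hw)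

/-- `-log (1 - tk z w)` is PSD on the ball. -/
lemma psd_neg_log : IsPSDKernelOn (fun z w : E => -Complex.log (1 - tk z w))
    (ball (0 : E) 1) := by
  have hterm : ∀ (k : ℕ) (z w : E),
      (((k : ℝ)⁻¹ : ℝ) : ℂ) * tk z w ^ k = tk z w ^ k / (k : ℂ) := by
    intro k z w
    push_cast
    ring
  refine psd_congr (psd_tsum
    (K := fun k z w => (((k : ℝ)⁻¹ : ℝ) : ℂ) * tk z w ^ k)
    (fun k => psd_smul (by positivity) (psd_tk_pow k)) ?_) ?_
  · intro z hz w hw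
    have hsum : Summable fun k : ℕ => tk z w ^ k / (k : ℂ) :=
      (Complex.hasSum_taylorSeries_neg_log (tk_norm_lt hz hw)).summable
    exact hsum.congr fun k => (hterm k z w).symm
  · intro z hz w hw
    rw [tsum_congr (fun k => hterm k z w)]
    exact ((Complex.hasSum_taylorSeries_neg_log (tk_norm_lt hz hw)).tsum_eq)

variable {X : Type*} {S : Set X}

/-- Exponential of a PSD kernel is PSD. -/
lemma psd_exp {K : X → X → ℂ} (h : IsPSDKernelOn K S) :
    IsPSDKernelOn (fun z w => Complex.exp (K z w)) S := by
  have hterm : ∀ (m : ℕ) (x : ℂ), (((m.factorial : ℝ)⁻¹ : ℝ) : ℂ) * x ^ m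
      = x ^ m / (m.factorial : ℂ) := by
    intro m x
    push_cast
    ring
  refine psd_congr (psd_tsum
    (K := fun m z w => (((m.factorial : ℝ)⁻¹ : ℝ) : ℂ) * K z w ^ m)
    (fun m => psd_smul (by positivity) (psd_pow h m)) ?_) ?_
  · intro z _ w _
    have hsum : Summable fun m : ℕ => K z w ^ m / (m.factorial : ℂ) :=
      NormedSpace.expSeries_div_summable (K z w)
    exact hsum.congr fun m => (hterm m _).symm
  · intro z _ w _
    rw [tsum_congr (fun m => hterm m (K z w))]
    have := congrFun Complex.exp_eq_exp_ℂ (K z w)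
    rw [this, NormedSpace.exp_eq_tsum_div]

/-- `(1 - tk z w) ^ (-β)` is PSD on the ball for real `β ≥ 0`. -/
lemma psd_cpow_neg {β : ℝ} (hβ : 0 ≤ β) :
    IsPSDKernelOn (fun z w : E => (1 - tk z w) ^ (-(β : ℂ))) (ball (0 : E) 1) := by
  have hL : IsPSDKernelOn
      (fun z w : E => (β : ℂ) * -Complex.log (1 - tk z w)) (ball (0 : E) 1) :=
    psd_smul hβ psd_neg_log
  refine psd_congr (psd_exp hL) fun z hz w hw => ?_
  rw [Complex.cpow_def_of_ne_zero (tk_ne_one hz hw)]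
  congr 1
  ring

end BallKernels

end

section MainProof

open BallRowAux

variable {n : ℕ}

local notation "E" => EuclideanSpace ℂ (Fin n)

/-- The Cauchy–Schwarz kernel `‖c‖² ⟨z,w⟩ − ⟨z,c⟩ conj ⟨w,c⟩` is PSD. -/
lemma psd_cs (c : Fin n → ℂ) :
    IsPSDKernelOn (fun z w : E =>
      ((∑ i, ‖c i‖ ^ 2 : ℝ) : ℂ) * tk z w
        - (∑ i, z i * conj (c i)) * conj (∑ i, w i * conj (c i)))
      (ball (0 : E) 1) := by
  intro m x hx a
  classical
  set U : E := (WithLp.equiv 2 (Fin n → ℂ)).symm (fun k => ∑ i, a i * x i k) with hU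
  set cv : E := (WithLp.equiv 2 (Fin n → ℂ)).symm c with hcv
  have hUk : ∀ k, U k = ∑ i, a i * x i k := fun k => rfl
  have hck : ∀ k, cv k = c k := fun k => rfl
  -- the quadratic form of tk
  have e1 : ∑ i, ∑ j, a i * conj (a j) * tk (x i) (x j)
      = ∑ k, U k * conj (U k) := by
    have : ∀ i j, a i * conj (a j) * tk (x i) (x j)
        = ∑ k, (a i * x i k) * conj (a j * x j k) := by
      intro i j
      simp only [tk]
      rw [Finset.mul_sum]
      refine Finset.sum_congr rfl fun k _ => by simp only [map_mul]; ring
    simp only [this]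
    calc ∑ i, ∑ j, ∑ k, (a i * x i k) * conj (a j * x j k)
        = ∑ i, ∑ k, ∑ j, (a i * x i k) * conj (a j * x j k) :=
          Finset.sum_congr rfl fun i _ => Finset.sum_comm
      _ = ∑ k, ∑ i, ∑ j, (a i * x i k) * conj (a j * x j k) := Finset.sum_comm
      _ = ∑ k, U k * conj (U k) := by
          refine Finset.sum_congr rfl fun k _ => ?_
          rw [hUk, map_sum, Finset.sum_mul_sum]
  -- the quadratic form of the rank-one part
  have e2 : ∑ i, ∑ j, a i * conj (a j) *
        ((∑ k, x i k * conj (c k)) * conj (∑ k, x j k * conj (c k)))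
      = (∑ k, U k * conj (c k)) * conj (∑ k, U k * conj (c k)) := by
    have hsum : ∀ i : Fin m, a i * (∑ k, x i k * conj (c k))
        = ∑ k, a i * x i k * conj (c k) := by
      intro i
      rw [Finset.mul_sum]
      exact Finset.sum_congr rfl fun k _ => by ring
    have hUc : ∑ k, U k * conj (c k) = ∑ i, a i * (∑ k, x i k * conj (c k)) := by
      simp only [hsum, hUk, Finset.sum_mul]
      rw [Finset.sum_comm]
    rw [hUc, map_sum, Finset.sum_mul_sum]
    refine Finset.sum_congr rfl fun i _ => Finset.sum_congr rfl fun j _ => by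
      simp only [map_mul]
      ring
  have esplit : ∑ i, ∑ j, a i * conj (a j) *
        (((∑ i, ‖c i‖ ^ 2 : ℝ) : ℂ) * tk (x i) (x j)
          - (∑ k, x i k * conj (c k)) * conj (∑ k, x j k * conj (c k)))
      = ((∑ i, ‖c i‖ ^ 2 : ℝ) : ℂ) * (∑ k, U k * conj (U k))
        - (∑ k, U k * conj (c k)) * conj (∑ k, U k * conj (c k)) := by
    rw [← e1, ← e2, Finset.mul_sum, ← Finset.sum_sub_distrib]
    refine Finset.sum_congr rfl fun i _ => ?_
    rw [Finset.mul_sum, ← Finset.sum_sub_distrib]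
    exact Finset.sum_congr rfl fun j _ => by ring
  rw [esplit]
  -- now express everything with norms and inner products
  have hnorm : ‖cv‖ ^ 2 = ∑ i, ‖c i‖ ^ 2 := by
    rw [EuclideanSpace.norm_eq, Real.sq_sqrt (Finset.sum_nonneg fun i _ => sq_nonneg _)]
    exact Finset.sum_congr rfl fun i _ => by rw [hck]
  have hnc : ((∑ i, ‖c i‖ ^ 2 : ℝ) : ℂ) = ((‖cv‖ ^ 2 : ℝ) : ℂ) := by rw [hnorm]
  have hUU : ∑ k, U k * conj (U k) = ((‖U‖ ^ 2 : ℝ) : ℂ) := by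
    have : (inner ℂ U U : ℂ) = ∑ k, U k * conj (U k) := by
      rw [PiLp.inner_apply]
      exact Finset.sum_congr rfl fun k _ => by rw [RCLike.inner_apply] <;> ring
    rw [← this, inner_self_eq_norm_sq_to_K]
    norm_num
  have hs : ∑ k, U k * conj (c k) = (inner ℂ cv U : ℂ) := by
    rw [PiLp.inner_apply]
    exact Finset.sum_congr rfl fun k _ => by rw [RCLike.inner_apply, hck] <;> ring
  rw [hnc, hUU, hs, Complex.mul_conj]
  rw [← Complex.ofReal_mul, ← Complex.ofReal_sub]
  rw [Complex.zero_le_real]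
  have hcs := norm_inner_le_norm (𝕜 := ℂ) cv U
  have h1 : Complex.normSq (inner ℂ cv U : ℂ) = ‖(inner ℂ cv U : ℂ)‖ ^ 2 := by
    rw [Complex.normSq_eq_norm_sq]
  rw [h1]
  nlinarith [norm_nonneg cv, norm_nonneg U, norm_nonneg (inner ℂ cv U : ℂ)]

lemma aux_alg (Sc A t : ℂ) (h : 1 - t ≠ 0) :
    (Sc - A) * (1 - t)⁻¹ = Sc + (Sc * t - A) * (1 - t)⁻¹ := by
  field_simp
  ring

theorem ball_row_contraction_scalar_combination_aux
    (b : E → E)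
    (hb_maps : ∀ z ∈ ball (0 : E) 1, b z ∈ ball (0 : E) 1)
    (α : ℝ) (hα : 1 ≤ α)
    (hpos : IsPSDKernelOn
      (fun z w => ((1 - ∑ i, b z i * conj (b w i)) / (1 - ∑ i, z i * conj (w i))) ^ (α : ℂ))
      (ball (0 : E) 1))
    (c : Fin n → ℂ) :
    IsPSDKernelOn
      (fun z w => (((∑ i, ‖c i‖ ^ 2 : ℝ) : ℂ) -
          (∑ i, b z i * conj (c i)) * conj (∑ i, b w i * conj (c i))) *
        (1 - ∑ i, z i * conj (w i)) ^ (-(α : ℂ)))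
      (ball (0 : E) 1) := by
  have hSc0 : (0 : ℝ) ≤ ∑ i, ‖c i‖ ^ 2 := Finset.sum_nonneg fun i _ => sq_nonneg _
  have hH : IsPSDKernelOn (fun u v : E =>
      (((∑ i, ‖c i‖ ^ 2 : ℝ) : ℂ) -
        (∑ i, u i * conj (c i)) * conj (∑ i, v i * conj (c i))) * (1 - tk u v)⁻¹)
      (ball (0 : E) 1) :=
    psd_congr (psd_add (psd_const hSc0) (psd_mul (psd_cs c) psd_geo))
      (fun u hu v hv => (aux_alg _ _ _ (tk_ne_one hu hv)).symm)
  have hG : IsPSDKernelOn (fun u v : E =>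
      (((∑ i, ‖c i‖ ^ 2 : ℝ) : ℂ) -
        (∑ i, u i * conj (c i)) * conj (∑ i, v i * conj (c i))) *
        (1 - tk u v) ^ (-(α : ℂ)))
      (ball (0 : E) 1) := by
    refine psd_congr (psd_mul hH (psd_cpow_neg (β := α - 1) (by linarith))) fun u hu v hv => ?_
    have hne := tk_ne_one hu hv
    have e : (1 - tk u v) ^ (-(α : ℂ))
        = (1 - tk u v)⁻¹ * (1 - tk u v) ^ (-(((α - 1 : ℝ)) : ℂ)) := by
      have h2 : (-(α : ℂ)) = (-1) + (-(((α - 1 : ℝ)) : ℂ)) := by push_cast; ring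
      rw [h2, Complex.cpow_add _ _ hne, Complex.cpow_neg_one]
    rw [e]
    ring
  have hGb := psd_comp b hG hb_maps
  refine psd_congr (psd_mul hGb hpos) fun z hz w hw => ?_
  have hkey := cpow_cancel (tk_re_pos (hb_maps z hz) (hb_maps w hw)) (tk_re_pos hz hw) (α : ℂ)
  show ((((∑ i, ‖c i‖ ^ 2 : ℝ) : ℂ) -
        (∑ i, b z i * conj (c i)) * conj (∑ i, b w i * conj (c i))) *
        (1 - tk (b z) (b w)) ^ (-(α : ℂ)))
      * ((1 - tk (b z) (b w)) / (1 - tk z w)) ^ (α : ℂ)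
      = (((∑ i, ‖c i‖ ^ 2 : ℝ) : ℂ) -
        (∑ i, b z i * conj (c i)) * conj (∑ i, b w i * conj (c i))) *
        (1 - tk z w) ^ (-(α : ℂ))
  rw [mul_assoc, hkey]

end MainProof

noncomputable section

/-- If `K^{b,α}` is positive semidefinite then for every `c ∈ ℂⁿ` the kernel
`(|c|² − ⟨b z, c⟩·conj(⟨b w, c⟩))·(1 − ⟨z,w⟩)^{−α}` is positive semidefinite
(the operator bound `‖∑ conj(cᵢ) M_{b_i}‖ ≤ |c|` on `H²_{n,α}`). -/
theorem ball_row_contraction_scalar_combination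
    (n : ℕ) (hn : 1 ≤ n)
    (b : EuclideanSpace ℂ (Fin n) → EuclideanSpace ℂ (Fin n))
    (hb_holo : DifferentiableOn ℂ b (ball (0 : EuclideanSpace ℂ (Fin n)) 1))
    (hb_maps : ∀ z ∈ ball (0 : EuclideanSpace ℂ (Fin n)) 1,
      b z ∈ ball (0 : EuclideanSpace ℂ (Fin n)) 1)
    (α : ℝ) (hα : 1 ≤ α)
    (hpos : IsPSDKernelOn
      (fun z w => ((1 - ∑ i, b z i * conj (b w i)) / (1 - ∑ i, z i * conj (w i))) ^ (α : ℂ))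
      (ball (0 : EuclideanSpace ℂ (Fin n)) 1))
    (c : Fin n → ℂ) :
    IsPSDKernelOn
      (fun z w => (((∑ i, ‖c i‖ ^ 2 : ℝ) : ℂ) -
          (∑ i, b z i * conj (c i)) * conj (∑ i, b w i * conj (c i))) *
        (1 - ∑ i, z i * conj (w i)) ^ (-(α : ℂ)))
      (ball (0 : EuclideanSpace ℂ (Fin n)) 1) :=
  ball_row_contraction_scalar_combination_aux b hb_maps α hα hpos c

end
end

section
/- Let n ≥ 1, let b : 𝔹ⁿ → 𝔹ⁿ be a holomorphic map of the open unit ball into itself, let α ≥ 1 be a real number, and suppose the kernel K^{b,α}(z,w) = ((1 − ⟨b(z), b(w)⟩)/(1 − ⟨z,w⟩))^α (principal branch) is positive semidefinite on 𝔹ⁿ. Define g(z) = (1 − ⟨b(z), b(0)⟩)^{−α}. Then the kernel (z,w) ↦ ((1 − |b(0)|)^{−2α} − g(z)·conj(g(w))) · (1 − ⟨z,w⟩)^{−α} is positive semidefinite on 𝔹ⁿ, where |b(0)| = (∑_{i=1}^n |b_i(0)|²)^{1/2}. (This is the second assertion of the ball lemma: 1/K^{b,α}(·,0) is a multiplier of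 H²_{n,α} of norm at most (1 − |b(0)|)^{−α}.) -/
open Complex Metric ComplexConjugate
open scoped ComplexOrder

noncomputable section

open Filter Finset

open scoped MatrixOrder in
lemma exists_eq_conjTranspose_mul_self' {m : ℕ} {A : Matrix (Fin m) (Fin m) ℂ}
    (hA : A.PosSemidef) : ∃ B : Matrix (Fin m) (Fin m) ℂ, A = B.conjTranspose * B := by
  obtain ⟨X, hX, -, hXA⟩ :=
    CFC.exists_sqrt_of_isSelfAdjoint_of_quasispectrumRestricts hA.isHermitian
      (QuasispectrumRestricts.nnreal_of_nonneg hA.nonneg)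
  refine ⟨X, ?_⟩
  rw [← hXA]
  nth_rewrite 1 [← hX.star_eq]
  rfl


namespace BallLemma

variable {m : ℕ}

/-- quadratic form value of a matrix. -/
def qf (A : Matrix (Fin m) (Fin m) ℂ) (c : Fin m → ℂ) : ℂ :=
  ∑ i, ∑ j, c i * conj (c j) * A i j

lemma dot_eq_qf (A : Matrix (Fin m) (Fin m) ℂ) (v : Fin m → ℂ) :
    dotProduct (star v) (A.mulVec v) = qf A (star v) := by
  simp only [qf, dotProduct, Matrix.mulVec, Pi.star_apply, Finset.mul_sum]
  refine Finset.sum_congr rfl fun i _ => Finset.sum_congr rfl fun j _ => ?_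
  simp [dotProduct]
  ring

lemma qf_nonneg_of_psd {A : Matrix (Fin m) (Fin m) ℂ} (hA : A.PosSemidef)
    (c : Fin m → ℂ) : 0 ≤ qf A c := by
  have := hA.dotProduct_mulVec_nonneg (star c)
  rwa [dot_eq_qf, star_star] at this

lemma posSemidef_of_qf {A : Matrix (Fin m) (Fin m) ℂ}
    (h1 : ∀ i j, conj (A j i) = A i j) (h2 : ∀ c, 0 ≤ qf A c) : A.PosSemidef := by
  refine Matrix.PosSemidef.of_dotProduct_mulVec_nonneg ?_ ?_
  · ext i j
    simpa [Matrix.conjTranspose_apply] using h1 i j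
  · intro v
    rw [dot_eq_qf]
    exact h2 _

lemma herm_entry {A : Matrix (Fin m) (Fin m) ℂ} (hA : A.IsHermitian) (i j : Fin m) :
    conj (A j i) = A i j := by
  have := congrFun (congrFun hA i) j
  simpa [Matrix.conjTranspose_apply] using this

end BallLemma
namespace BallLemma

lemma psd_ones : (Matrix.of fun _ _ : Fin m => (1 : ℂ)).PosSemidef := by
  apply posSemidef_of_qf
  · intro i j; simp
  · intro c
    have : qf (Matrix.of fun _ _ : Fin m => (1 : ℂ)) c
        = (∑ i, c i) * conj (∑ j, c j) := by
      simp only [qf, Matrix.of_apply, mul_one, Finset.sum_mul, Finset.mul_sum, map_sum]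
      rw [Finset.sum_comm]
    rw [this, Complex.mul_conj]
    exact Complex.zero_le_real.2 (Complex.normSq_nonneg _)

lemma psd_real_smul {A : Matrix (Fin m) (Fin m) ℂ} (hA : A.PosSemidef)
    {t : ℝ} (ht : 0 ≤ t) : (Matrix.of fun i j => (t : ℂ) * A i j).PosSemidef := by
  apply posSemidef_of_qf
  · intro i j
    simp only [Matrix.of_apply, map_mul, Complex.conj_ofReal]
    rw [herm_entry hA.1]
  · intro c
    have : qf (Matrix.of fun i j => (t : ℂ) * A i j) c = (t : ℂ) * qf A c := by
      simp only [qf, Matrix.of_apply, Finset.mul_sum]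
      exact Finset.sum_congr rfl fun i _ => Finset.sum_congr rfl fun j _ => by ring
    rw [this]
    exact mul_nonneg (Complex.zero_le_real.2 ht) (qf_nonneg_of_psd hA c)

lemma psd_add {A B : Matrix (Fin m) (Fin m) ℂ} (hA : A.PosSemidef) (hB : B.PosSemidef) :
    (Matrix.of fun i j => A i j + B i j).PosSemidef := by
  apply posSemidef_of_qf
  · intro i j
    simp only [Matrix.of_apply, map_add]
    rw [herm_entry hA.1, herm_entry hB.1]
  · intro c
    have : qf (Matrix.of fun i j => A i j + B i j) c = qf A c + qf B c := by
      simp [qf, mul_add, Finset.sum_add_distrib]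
    rw [this]
    exact add_nonneg (qf_nonneg_of_psd hA c) (qf_nonneg_of_psd hB c)

/-- Schur product: quadratic form of a Hadamard product, one factor fully PSD,
the other only form-nonnegative. -/
lemma schur_qf {A : Matrix (Fin m) (Fin m) ℂ} (hA : A.PosSemidef)
    (K : Matrix (Fin m) (Fin m) ℂ) (hK : ∀ c, 0 ≤ qf K c) (c : Fin m → ℂ) :
    0 ≤ qf (Matrix.of fun i j => A i j * K i j) c := by
  obtain ⟨B, hB⟩ := exists_eq_conjTranspose_mul_self' hA
  have hentry : ∀ i j, A i j = ∑ t, conj (B t i) * B t j := by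
    intro i j
    rw [hB]
    simp [Matrix.mul_apply, Matrix.conjTranspose_apply]
  have key : qf (Matrix.of fun i j => A i j * K i j) c
      = ∑ t, qf K (fun i => c i * conj (B t i)) := by
    calc qf (Matrix.of fun i j => A i j * K i j) c
        = ∑ i, ∑ j, ∑ t, (c i * conj (B t i)) * conj (c j * conj (B t j)) * K i j := by
          simp only [qf, Matrix.of_apply, hentry, Finset.sum_mul, Finset.mul_sum]
          refine Finset.sum_congr rfl fun i _ => Finset.sum_congr rfl fun j _ =>
            Finset.sum_congr rfl fun t _ => ?_
          simp only [map_mul, Complex.conj_conj]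
          ring
      _ = ∑ i, ∑ t, ∑ j, (c i * conj (B t i)) * conj (c j * conj (B t j)) * K i j :=
          Finset.sum_congr rfl fun i _ => Finset.sum_comm ..
      _ = ∑ t, ∑ i, ∑ j, (c i * conj (B t i)) * conj (c j * conj (B t j)) * K i j :=
          Finset.sum_comm ..
      _ = ∑ t, qf K (fun i => c i * conj (B t i)) := rfl
  rw [key]
  exact Finset.sum_nonneg fun t _ => hK _

end BallLemma
namespace BallLemma

lemma schur_psd {A K : Matrix (Fin m) (Fin m) ℂ} (hA : A.PosSemidef) (hK : K.PosSemidef) :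
    (Matrix.of fun i j => A i j * K i j).PosSemidef := by
  apply posSemidef_of_qf
  · intro i j
    simp only [Matrix.of_apply, map_mul]
    rw [herm_entry hA.1, herm_entry hK.1]
  · exact schur_qf hA K (qf_nonneg_of_psd hK)

/-- entrywise limits of PSD matrices are PSD -/
lemma psd_limit (A : ℕ → Matrix (Fin m) (Fin m) ℂ) (B : Matrix (Fin m) (Fin m) ℂ)
    (hA : ∀ K, (A K).PosSemidef)
    (h : ∀ i j, Tendsto (fun K => A K i j) atTop (nhds (B i j))) : B.PosSemidef := by
  apply posSemidef_of_qf
  · intro i j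
    have h1 : Tendsto (fun K => conj (A K j i)) atTop (nhds (conj (B j i))) :=
      (Complex.continuous_conj.tendsto _).comp (h j i)
    have h2 : ∀ K, conj (A K j i) = A K i j := fun K => herm_entry (hA K).1 i j
    simp only [h2] at h1
    exact tendsto_nhds_unique h1 (h i j)
  · intro c
    have hqf : Tendsto (fun K => qf (A K) c) atTop (nhds (qf B c)) := by
      refine tendsto_finset_sum _ fun i _ => tendsto_finset_sum _ fun j _ => ?_
      exact (h i j).const_mul _
    have him : Tendsto (fun K => (qf (A K) c).im) atTop (nhds ((qf B c).im)) :=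
      (Complex.continuous_im.tendsto _).comp hqf
    have hre : Tendsto (fun K => (qf (A K) c).re) atTop (nhds ((qf B c).re)) :=
      (Complex.continuous_re.tendsto _).comp hqf
    have hnn : ∀ K, 0 ≤ qf (A K) c := fun K => qf_nonneg_of_psd (hA K) c
    rw [Complex.le_def]
    constructor
    · simpa using ge_of_tendsto hre (Eventually.of_forall fun K =>
        (Complex.le_def.mp (hnn K)).1)
    · have : ∀ K, (qf (A K) c).im = 0 := fun K => ((Complex.le_def.mp (hnn K)).2).symm
      simp only [this] at him
      simpa using (tendsto_nhds_unique him tendsto_const_nhds).symm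

lemma psd_sum_range (F : ℕ → Matrix (Fin m) (Fin m) ℂ) (hF : ∀ k, (F k).PosSemidef) (K : ℕ) :
    (Matrix.of fun i j => ∑ k ∈ Finset.range K, F k i j).PosSemidef := by
  induction K with
  | zero =>
      apply posSemidef_of_qf
      · intro i j; simp
      · intro c; simp [qf]
  | succ K ih =>
      have := psd_add ih (hF K)
      convert this using 2
      ext i j
      simp [Finset.sum_range_succ]

/-- Hadamard (entrywise) powers of a PSD matrix are PSD. -/
lemma psd_hpow {A : Matrix (Fin m) (Fin m) ℂ} (hA : A.PosSemidef) (k : ℕ) :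
    (Matrix.of fun i j => A i j ^ k).PosSemidef := by
  induction k with
  | zero => simpa using psd_ones
  | succ k ih => simpa [pow_succ] using schur_psd ih hA

end BallLemma
namespace BallLemma

lemma psd_entry_exp {G : Matrix (Fin m) (Fin m) ℂ} (hG : G.PosSemidef) :
    (Matrix.of fun i j => Complex.exp (G i j)).PosSemidef := by
  apply psd_limit (fun J => Matrix.of fun i j => ∑ k ∈ Finset.range J, G i j ^ k / (k.factorial : ℂ))
  · intro J
    apply psd_sum_range (fun k => Matrix.of fun i j => G i j ^ k / (k.factorial : ℂ))
    intro k
    have hpos : (0:ℝ) ≤ ((k.factorial : ℝ))⁻¹ := by positivity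
    have heq : (Matrix.of fun i j => G i j ^ k / (k.factorial : ℂ))
        = Matrix.of fun i j => Complex.ofReal ((k.factorial : ℝ)⁻¹) *
            ((Matrix.of fun i j => G i j ^ k) i j) := by
      ext i j
      simp only [Matrix.of_apply, div_eq_inv_mul]
      push_cast
      ring
    rw [heq]
    exact psd_real_smul (psd_hpow hG k) hpos
  · intro i j
    have h := NormedSpace.expSeries_div_hasSum_exp (G i j)
    have := h.tendsto_sum_nat
    simpa [Matrix.of_apply, ← Complex.exp_eq_exp_ℂ] using this

lemma psd_one_sub_inv {σ : Matrix (Fin m) (Fin m) ℂ} (hσ : σ.PosSemidef)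
    (hlt : ∀ i j, ‖σ i j‖ < 1) :
    (Matrix.of fun i j => (1 - σ i j)⁻¹).PosSemidef := by
  apply psd_limit (fun K => Matrix.of fun i j => ∑ k ∈ Finset.range K, σ i j ^ k)
  · intro K
    exact psd_sum_range (fun k => Matrix.of fun i j => σ i j ^ k) (fun k => psd_hpow hσ k) K
  · intro i j
    exact (hasSum_geometric_of_norm_lt_one (hlt i j)).tendsto_sum_nat

lemma psd_neg_log_one_sub {σ : Matrix (Fin m) (Fin m) ℂ} (hσ : σ.PosSemidef)
    (hlt : ∀ i j, ‖σ i j‖ < 1) :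
    (Matrix.of fun i j => -Complex.log (1 - σ i j)).PosSemidef := by
  apply psd_limit (fun K => Matrix.of fun i j => ∑ k ∈ Finset.range K, σ i j ^ k / (k : ℂ))
  · intro K
    apply psd_sum_range (fun k => Matrix.of fun i j => σ i j ^ k / (k : ℂ))
    intro k
    have hpos : (0:ℝ) ≤ ((k : ℝ))⁻¹ := by positivity
    have heq : (Matrix.of fun i j => σ i j ^ k / (k : ℂ))
        = Matrix.of fun i j => Complex.ofReal ((k : ℝ)⁻¹) * ((Matrix.of fun i j => σ i j ^ k) i j) := by
      ext i j
      simp only [Matrix.of_apply, div_eq_inv_mul]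
      push_cast
      ring
    rw [heq]
    exact psd_real_smul (psd_hpow hσ k) hpos
  · intro i j
    exact (Complex.hasSum_taylorSeries_neg_log (hlt i j)).tendsto_sum_nat

lemma one_sub_ne_zero_of_norm_lt_one {z : ℂ} (h : ‖z‖ < 1) : (1 : ℂ) - z ≠ 0 := by
  intro hz
  have : z = 1 := by linear_combination -hz
  rw [this] at h
  simp at h

lemma psd_one_sub_cpow {σ : Matrix (Fin m) (Fin m) ℂ} (hσ : σ.PosSemidef)
    (hlt : ∀ i j, ‖σ i j‖ < 1) {β : ℝ} (hβ : 0 ≤ β) :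
    (Matrix.of fun i j => (1 - σ i j) ^ (-(β:ℂ))).PosSemidef := by
  have hG := psd_neg_log_one_sub hσ hlt
  have hβG := psd_real_smul hG hβ
  have := psd_entry_exp hβG
  have heq : (Matrix.of fun i j => (1 - σ i j) ^ (-(β:ℂ)))
      = Matrix.of fun i j => Complex.exp ((Matrix.of fun i j =>
          (β : ℂ) * ((Matrix.of fun i j => -Complex.log (1 - σ i j)) i j)) i j) := by
    ext i j
    simp only [Matrix.of_apply]
    rw [Complex.cpow_def_of_ne_zero (one_sub_ne_zero_of_norm_lt_one (hlt i j))]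
    ring_nf
  rw [heq]
  exact this

end BallLemma
namespace BallLemma

variable {E : Type*} [NormedAddCommGroup E] [InnerProductSpace ℂ E]

lemma inner_expand (c : Fin m → ℂ) (x : Fin m → E) :
    (inner ℂ (∑ j, c j • x j) (∑ i, c i • x i) : ℂ)
      = ∑ j, ∑ i, conj (c j) * (c i * inner ℂ (x j) (x i)) := by
  rw [sum_inner]
  refine Finset.sum_congr rfl fun j _ => ?_
  rw [inner_smul_left, inner_sum, Finset.mul_sum]
  refine Finset.sum_congr rfl fun i _ => ?_
  rw [inner_smul_right]

lemma inner_expand_left (c : Fin m → ℂ) (x : Fin m → E) (v : E) :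
    (inner ℂ v (∑ i, c i • x i) : ℂ) = ∑ i, c i * inner ℂ v (x i) := by
  rw [inner_sum]
  exact Finset.sum_congr rfl fun i _ => inner_smul_right _ _ _

lemma inner_self_ofReal (y : E) : (inner ℂ y y : ℂ) = Complex.ofReal (‖y‖^2) := by
  rw [inner_self_eq_norm_sq_to_K]; norm_cast

lemma psd_gram (x : Fin m → E) :
    (Matrix.of fun i j => (inner ℂ (x j) (x i) : ℂ)).PosSemidef := by
  apply posSemidef_of_qf
  · intro i j
    simpa [Matrix.of_apply] using (inner_conj_symm (x j) (x i) : _)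
  · intro c
    set y := ∑ i, c i • x i with hy
    have h1 : qf (Matrix.of fun i j => (inner ℂ (x j) (x i) : ℂ)) c = inner ℂ y y := by
      rw [hy, inner_expand, qf, Finset.sum_comm]
      exact Finset.sum_congr rfl fun j _ => Finset.sum_congr rfl fun i _ => by
        simp only [Matrix.of_apply]; ring
    rw [h1, inner_self_ofReal]
    exact Complex.zero_le_real.2 (sq_nonneg _)

lemma psd_cs (v₀ : E) (x : Fin m → E) :
    (Matrix.of fun i j => Complex.ofReal (‖v₀‖^2) * inner ℂ (x j) (x i)
      - inner ℂ v₀ (x i) * inner ℂ (x j) v₀).PosSemidef := by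
  apply posSemidef_of_qf
  · intro i j
    simp only [Matrix.of_apply, map_sub, map_mul, Complex.conj_ofReal,
      inner_conj_symm]
    ring
  · intro c
    set y := ∑ i, c i • x i with hy
    have e1 : (inner ℂ v₀ y : ℂ) = ∑ i, c i * inner ℂ v₀ (x i) := by
      rw [hy]; exact inner_expand_left c x v₀
    have e2 : (conj (inner ℂ v₀ y : ℂ)) = ∑ j, conj (c j) * inner ℂ (x j) v₀ := by
      rw [e1, map_sum]
      exact Finset.sum_congr rfl fun j _ => by rw [map_mul, inner_conj_symm]
    have e3 : (inner ℂ v₀ y : ℂ) * conj (inner ℂ v₀ y : ℂ)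
        = ∑ j, ∑ i, (conj (c j) * inner ℂ (x j) v₀) * (c i * inner ℂ v₀ (x i)) := by
      rw [mul_comm, e2, e1, Finset.sum_mul]
      exact Finset.sum_congr rfl fun j _ => by rw [Finset.mul_sum]
    have e4 : (inner ℂ y y : ℂ) = ∑ j, ∑ i, conj (c j) * (c i * inner ℂ (x j) (x i)) := by
      rw [hy]; exact inner_expand c x
    have h1 : qf (Matrix.of fun i j => Complex.ofReal (‖v₀‖^2) * inner ℂ (x j) (x i)
        - inner ℂ v₀ (x i) * inner ℂ (x j) v₀) c
        = Complex.ofReal (‖v₀‖^2) * inner ℂ y y - inner ℂ v₀ y * conj (inner ℂ v₀ y : ℂ) := by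
      rw [e3, e4, qf, Finset.mul_sum, ← Finset.sum_sub_distrib, Finset.sum_comm]
      refine Finset.sum_congr rfl fun j _ => ?_
      rw [Finset.mul_sum, ← Finset.sum_sub_distrib]
      refine Finset.sum_congr rfl fun i _ => ?_
      simp only [Matrix.of_apply]
      ring
    have h2 : (inner ℂ v₀ y : ℂ) * conj (inner ℂ v₀ y : ℂ) = Complex.ofReal (‖(inner ℂ v₀ y : ℂ)‖^2) := by
      rw [Complex.mul_conj, Complex.normSq_eq_norm_sq, Complex.ofReal_pow]
    rw [h1, h2, inner_self_ofReal]
    have key : (0:ℝ) ≤ ‖v₀‖^2 * ‖y‖^2 - ‖(inner ℂ v₀ y : ℂ)‖^2 := by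
      have hcs : ‖(inner ℂ v₀ y : ℂ)‖ ≤ ‖v₀‖ * ‖y‖ := norm_inner_le_norm v₀ y
      nlinarith [norm_nonneg (inner ℂ v₀ y : ℂ), norm_nonneg v₀, norm_nonneg y]
    have hcast : (Complex.ofReal (‖v₀‖^2) * Complex.ofReal (‖y‖^2) - Complex.ofReal (‖(inner ℂ v₀ y : ℂ)‖^2))
        = ((‖v₀‖^2 * ‖y‖^2 - ‖(inner ℂ v₀ y : ℂ)‖^2 : ℝ) : ℂ) := by push_cast; ring
    rw [hcast]
    exact Complex.zero_le_real.2 key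

end BallLemma
namespace BallLemma

lemma le_of_sq_le_sq' {a b : ℝ} (ha : 0 ≤ a) (hb : 0 ≤ b) (h : a^2 ≤ b^2) : a ≤ b := by
  nlinarith

lemma lemmaB {N : ℕ} (v₀ : EuclideanSpace ℂ (Fin N)) (hv₀ : ‖v₀‖ < 1)
    (α : ℝ) (hα : 1 ≤ α) {m : ℕ} (u : Fin m → EuclideanSpace ℂ (Fin N))
    (hu : ∀ i, ‖u i‖ < 1) :
    (Matrix.of fun i j =>
      ((((1 - ‖v₀‖) ^ (-(2*α)) : ℝ) : ℂ) -
        (1 - (inner ℂ v₀ (u i) : ℂ)) ^ (-(α:ℂ)) * conj ((1 - (inner ℂ v₀ (u j) : ℂ)) ^ (-(α:ℂ)))) *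
      (1 - (inner ℂ (u j) (u i) : ℂ)) ^ (-(α:ℂ))).PosSemidef := by
  set r : ℝ := ‖v₀‖ with hr
  have hr0 : 0 ≤ r := norm_nonneg _
  have hr1 : r < 1 := hv₀
  have h1r : (0:ℝ) < 1 - r := by linarith
  set ℓ : Fin m → ℂ := fun i => (inner ℂ v₀ (u i) : ℂ) with hℓdef
  have hℓr : ∀ i, ‖ℓ i‖ ≤ r * ‖u i‖ := fun i => norm_inner_le_norm v₀ (u i)
  have hℓ1 : ∀ i, ‖ℓ i‖ < 1 := by
    intro i
    calc ‖ℓ i‖ ≤ r * ‖u i‖ := hℓr i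
    _ ≤ 1 * ‖u i‖ := by apply mul_le_mul_of_nonneg_right (le_of_lt hr1) (norm_nonneg _)
    _ < 1 := by simpa using hu i
  set σ : Matrix (Fin m) (Fin m) ℂ := Matrix.of fun i j => (inner ℂ (u j) (u i) : ℂ) with hσdef
  have hσ : σ.PosSemidef := psd_gram u
  have hσlt : ∀ i j, ‖σ i j‖ < 1 := by
    intro i j
    calc ‖σ i j‖ ≤ ‖u j‖ * ‖u i‖ := by
          simpa [hσdef] using norm_inner_le_norm (𝕜 := ℂ) (u j) (u i)
    _ < 1 * 1 := by
        apply mul_lt_mul'' (hu j) (hu i) (norm_nonneg _) (norm_nonneg _)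
    _ = 1 := by norm_num
  have hne : ∀ i j, (1:ℂ) - σ i j ≠ 0 := fun i j => one_sub_ne_zero_of_norm_lt_one (hσlt i j)
  set S : Matrix (Fin m) (Fin m) ℂ := Matrix.of fun i j => (1 - σ i j) ^ (-(α:ℂ)) with hSdef
  have hS : S.PosSemidef := psd_one_sub_cpow hσ hσlt (by linarith : (0:ℝ) ≤ α)
  -- the multiplier matrix bound
  obtain ⟨B, hB⟩ := exists_eq_conjTranspose_mul_self' hS
  set w : (Fin m → ℂ) → EuclideanSpace ℂ (Fin m) :=
    fun d => (PiLp.continuousLinearEquiv 2 ℂ (fun _ : Fin m => ℂ)).symm (B.mulVec (star d))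
    with hwdef
  have happ : ∀ d t, w d t = ∑ j, B t j * conj (d j) := by
    intro d t
    show (B.mulVec (star d)) t = _
    simp [Matrix.mulVec, dotProduct]
  have conj_mul_self : ∀ z : ℂ, conj z * z = Complex.ofReal (‖z‖^2) := by
    intro z
    rw [mul_comm, Complex.mul_conj, Complex.normSq_eq_norm_sq]
  have hwnorm : ∀ d, ‖w d‖^2 = ∑ t, ‖w d t‖^2 := by
    intro d
    rw [EuclideanSpace.norm_eq, Real.sq_sqrt]
    positivity
  have hentry : ∀ i j, S i j = ∑ t, conj (B t i) * B t j := by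
    intro i j
    rw [hB]
    simp [Matrix.mul_apply, Matrix.conjTranspose_apply]
  have qfS : ∀ d, qf S d = Complex.ofReal (‖w d‖^2) := by
    intro d
    calc qf S d = ∑ i, ∑ j, ∑ t, d i * conj (d j) * (conj (B t i) * B t j) := by
          simp only [qf, hentry, Finset.mul_sum]
      _ = ∑ i, ∑ t, ∑ j, d i * conj (d j) * (conj (B t i) * B t j) :=
          Finset.sum_congr rfl fun i _ => Finset.sum_comm ..
      _ = ∑ t, ∑ i, ∑ j, d i * conj (d j) * (conj (B t i) * B t j) := Finset.sum_comm ..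
      _ = ∑ t, conj (w d t) * w d t := by
          refine Finset.sum_congr rfl fun t _ => ?_
          have h1 : conj (w d t) = ∑ i, d i * conj (B t i) := by
            rw [happ, map_sum]
            refine Finset.sum_congr rfl fun i _ => ?_
            simp only [map_mul, Complex.conj_conj]
            ring
          rw [h1, happ, Finset.sum_mul]
          refine Finset.sum_congr rfl fun i _ => ?_
          rw [Finset.mul_sum]
          exact Finset.sum_congr rfl fun j _ => by ring
      _ = ∑ t, Complex.ofReal (‖w d t‖^2) := Finset.sum_congr rfl fun t _ => conj_mul_self _
      _ = Complex.ofReal (‖w d‖^2) := by rw [hwnorm d, Complex.ofReal_sum]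
  have w_sum : ∀ (s : Finset ℕ) (F : ℕ → Fin m → ℂ),
      w (fun i => ∑ k ∈ s, F k i) = ∑ k ∈ s, w (F k) := by
    intro s F
    ext t
    have h2 : (∑ k ∈ s, w (F k)) t = ∑ k ∈ s, w (F k) t := by
      rw [WithLp.ofLp_sum]; exact Finset.sum_apply ..
    rw [h2, happ]
    calc ∑ j, B t j * conj (∑ k ∈ s, F k j)
        = ∑ j, ∑ k ∈ s, B t j * conj (F k j) := by
          refine Finset.sum_congr rfl fun j _ => ?_
          rw [map_sum, Finset.mul_sum]
      _ = ∑ k ∈ s, ∑ j, B t j * conj (F k j) := Finset.sum_comm ..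
      _ = ∑ k ∈ s, w (F k) t := Finset.sum_congr rfl fun k _ => (happ (F k) t).symm
  have w_cmul : ∀ (a : ℂ) (d : Fin m → ℂ), w (fun i => a * d i) = conj a • w d := by
    intro a d
    ext t
    have h2 : (conj a • w d) t = conj a * w d t := rfl
    rw [h2, happ, happ, Finset.mul_sum]
    refine Finset.sum_congr rfl fun j _ => ?_
    simp only [map_mul]
    ring
  have wnorm_cmul : ∀ (a : ℂ) (d : Fin m → ℂ), ‖w (fun i => a * d i)‖ = ‖a‖ * ‖w d‖ := by
    intro a d
    rw [w_cmul, norm_smul]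
    simp
  have wcont : Continuous w := by
    refine ((PiLp.continuousLinearEquiv 2 ℂ (fun _ : Fin m => ℂ)).symm).continuous.comp ?_
    refine continuous_pi fun t => ?_
    simp only [Matrix.mulVec, dotProduct]
    exact continuous_finset_sum _ fun j _ =>
      continuous_const.mul (Complex.continuous_conj.comp (continuous_apply j))
  have wtend : ∀ (dseq : ℕ → Fin m → ℂ) (dl : Fin m → ℂ),
      (∀ i, Tendsto (fun K => dseq K i) atTop (nhds (dl i))) →
      Tendsto (fun K => ‖w (dseq K)‖) atTop (nhds ‖w dl‖) := by
    intro dseq dl h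
    have h1 : Tendsto dseq atTop (nhds dl) := tendsto_pi_nhds.mpr h
    exact (continuous_norm.comp wcont).continuousAt.tendsto.comp h1
  -- the linear multiplier bound
  set S' : Matrix (Fin m) (Fin m) ℂ :=
    Matrix.of fun i j => (1 - σ i j) ^ (-(((α-1):ℝ):ℂ)) with hS'def
  have hS' : S'.PosSemidef := psd_one_sub_cpow hσ hσlt (by linarith : (0:ℝ) ≤ α - 1)
  set Geo : Matrix (Fin m) (Fin m) ℂ := Matrix.of fun i j => (1 - σ i j)⁻¹ with hGeodef
  have hGeo : Geo.PosSemidef := psd_one_sub_inv hσ hσlt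
  set C : Matrix (Fin m) (Fin m) ℂ := Matrix.of fun i j =>
    Complex.ofReal (‖v₀‖^2) * (inner ℂ (u j) (u i) : ℂ)
      - (inner ℂ v₀ (u i) : ℂ) * (inner ℂ (u j) v₀ : ℂ) with hCdef
  have hC : C.PosSemidef := psd_cs v₀ u
  have hconst : (Matrix.of fun _ _ : Fin m => Complex.ofReal (r^2)).PosSemidef := by
    have h := psd_real_smul (psd_ones (m := m)) (sq_nonneg r)
    simpa using h
  set P : Matrix (Fin m) (Fin m) ℂ :=
    Matrix.of fun i j => Complex.ofReal (r^2) + C i j * Geo i j with hPdef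
  have hP : P.PosSemidef := psd_add hconst (schur_psd hC hGeo)
  set R : Matrix (Fin m) (Fin m) ℂ := Matrix.of fun i j => P i j * S' i j with hRdef
  have hR : R.PosSemidef := schur_psd hP hS'
  have hRentry : ∀ i j, R i j = (Complex.ofReal (r^2) - ℓ i * conj (ℓ j)) * S i j := by
    intro i j
    have hnz := hne i j
    have e0 : (inner ℂ (u j) v₀ : ℂ) = conj (ℓ j) := by
      simp only [hℓdef]
      exact (inner_conj_symm (u j) v₀).symm
    have hsplit : ((1:ℂ) - σ i j) ^ (-(α:ℂ))
        = ((1:ℂ) - σ i j) ^ (-(((α-1):ℝ):ℂ)) * ((1:ℂ) - σ i j)⁻¹ := by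
      have hexp : (-(α:ℂ)) = (-(((α-1):ℝ):ℂ)) + (-1) := by push_cast; ring
      rw [hexp, Complex.cpow_add _ _ hnz, Complex.cpow_neg_one]
    have key : Complex.ofReal (r^2) + (Complex.ofReal (‖v₀‖^2) * σ i j
          - ℓ i * conj (ℓ j)) * (1 - σ i j)⁻¹
        = (Complex.ofReal (r^2) - ℓ i * conj (ℓ j)) * (1 - σ i j)⁻¹ := by
      rw [← hr]
      field_simp
      ring
    show P i j * S' i j = _
    have hPij : P i j = Complex.ofReal (r^2) + (Complex.ofReal (‖v₀‖^2) * σ i j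
          - ℓ i * conj (ℓ j)) * (1 - σ i j)⁻¹ := by
      simp only [hPdef, hCdef, hGeodef, Matrix.of_apply, hσdef, hℓdef, e0]
    rw [hPij, key]
    show _ = (Complex.ofReal (r^2) - ℓ i * conj (ℓ j)) * ((1:ℂ) - σ i j) ^ (-(α:ℂ))
    rw [hsplit]
    show _ = _ * (((1:ℂ) - σ i j) ^ (-(((α-1):ℝ):ℂ)) * ((1:ℂ) - σ i j)⁻¹)
    simp only [hS'def, Matrix.of_apply]
    ring
  have hmultℓ : ∀ d, ‖w (fun i => ℓ i * d i)‖ ≤ r * ‖w d‖ := by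
    intro d
    have h0 : 0 ≤ qf R d := qf_nonneg_of_psd hR d
    have expand : qf R d = Complex.ofReal (r^2) * qf S d - qf S (fun i => ℓ i * d i) := by
      simp only [qf]
      rw [Finset.mul_sum, ← Finset.sum_sub_distrib]
      refine Finset.sum_congr rfl fun i _ => ?_
      rw [Finset.mul_sum, ← Finset.sum_sub_distrib]
      refine Finset.sum_congr rfl fun j _ => ?_
      rw [hRentry i j]
      simp only [map_mul]
      ring
    rw [expand, qfS, qfS] at h0
    have hcast : Complex.ofReal (r^2) * Complex.ofReal (‖w d‖^2)
        - Complex.ofReal (‖w (fun i => ℓ i * d i)‖^2)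
        = Complex.ofReal (r^2 * ‖w d‖^2 - ‖w (fun i => ℓ i * d i)‖^2) := by
      push_cast; ring
    rw [hcast] at h0
    have hreal := Complex.zero_le_real.mp h0
    apply le_of_sq_le_sq' (norm_nonneg _) (mul_nonneg hr0 (norm_nonneg _))
    rw [mul_pow]
    linarith
  have hpowk : ∀ (k : ℕ) (d : Fin m → ℂ), ‖w (fun i => ℓ i ^ k * d i)‖ ≤ r ^ k * ‖w d‖ := by
    intro k
    induction k with
    | zero => intro d; simp
    | succ k ih =>
        intro d
        have heq : (fun i => ℓ i ^ (k+1) * d i) = fun i => ℓ i ^ k * (ℓ i * d i) := by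
          funext i; ring
        rw [heq]
        calc ‖w (fun i => ℓ i ^ k * (ℓ i * d i))‖
            ≤ r ^ k * ‖w (fun i => ℓ i * d i)‖ := ih _
          _ ≤ r ^ k * (r * ‖w d‖) :=
              mul_le_mul_of_nonneg_left (hmultℓ d) (pow_nonneg hr0 k)
          _ = r ^ (k+1) * ‖w d‖ := by ring
  set L : Fin m → ℂ := fun i => -Complex.log (1 - ℓ i) with hLdef
  set Λ : ℝ := -Real.log (1 - r) with hΛdef
  have hΛ0 : 0 ≤ Λ := by
    have := Real.log_nonpos (by linarith : (0:ℝ) ≤ 1 - r) (by linarith : (1:ℝ) - r ≤ 1)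
    rw [hΛdef]; linarith
  have hΛsum : ∀ K : ℕ, ∑ k ∈ Finset.range K, r ^ k / k ≤ Λ := by
    intro K
    have H : HasSum (fun n : ℕ => r ^ (n+1) / (n+1)) Λ := by
      rw [hΛdef]
      exact Real.hasSum_pow_div_log_of_abs_lt_one (by rwa [_root_.abs_of_nonneg hr0])
    cases K with
    | zero => simpa using hΛ0
    | succ K =>
        rw [Finset.sum_range_succ']
        have h1 := sum_le_hasSum (Finset.range K) (fun i _ => by positivity) H
        have h2 : ∑ k ∈ Finset.range K, r ^ (k+1) / ((k:ℝ)+1)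
            = ∑ k ∈ Finset.range K, r ^ (k+1) / (((k+1 : ℕ)):ℝ) := by
          refine Finset.sum_congr rfl fun k _ => ?_
          push_cast; ring_nf
        simp only [pow_zero, Nat.cast_zero, div_zero, add_zero]
        calc ∑ k ∈ Finset.range K, r ^ (k+1) / (((k+1 : ℕ)):ℝ)
            = ∑ k ∈ Finset.range K, r ^ (k+1) / ((k:ℝ)+1) := h2.symm
          _ ≤ Λ := h1
  have hmultL : ∀ d, ‖w (fun i => L i * d i)‖ ≤ Λ * ‖w d‖ := by
    intro d
    have hpart : ∀ K, ‖w (fun i => (∑ k ∈ Finset.range K, ℓ i ^ k / k) * d i)‖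
        ≤ Λ * ‖w d‖ := by
      intro K
      have e1 : (fun i => (∑ k ∈ Finset.range K, ℓ i ^ k / k) * d i)
          = fun i => ∑ k ∈ Finset.range K, (ℓ i ^ k / k) * d i := by
        funext i; rw [Finset.sum_mul]
      rw [e1, w_sum]
      calc ‖∑ k ∈ Finset.range K, w (fun i => (ℓ i ^ k / k) * d i)‖
          ≤ ∑ k ∈ Finset.range K, ‖w (fun i => (ℓ i ^ k / k) * d i)‖ := norm_sum_le _ _
        _ ≤ ∑ k ∈ Finset.range K, (r ^ k / k) * ‖w d‖ := by
            refine Finset.sum_le_sum fun k _ => ?_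
            have e2 : (fun i => (ℓ i ^ k / k) * d i)
                = fun i => ((k:ℂ))⁻¹ * (ℓ i ^ k * d i) := by
              funext i; rw [div_eq_mul_inv]; ring
            rw [e2, wnorm_cmul]
            have e3 : ‖((k:ℂ))⁻¹‖ = ((k:ℝ))⁻¹ := by
              rw [norm_inv, Complex.norm_natCast]
            calc ‖((k:ℂ))⁻¹‖ * ‖w (fun i => ℓ i ^ k * d i)‖
                ≤ ((k:ℝ))⁻¹ * (r ^ k * ‖w d‖) := by
                  rw [e3]
                  exact mul_le_mul_of_nonneg_left (hpowk k d) (by positivity)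
              _ = (r ^ k / k) * ‖w d‖ := by rw [div_eq_mul_inv]; ring
        _ = (∑ k ∈ Finset.range K, r ^ k / k) * ‖w d‖ := by rw [Finset.sum_mul]
        _ ≤ Λ * ‖w d‖ := mul_le_mul_of_nonneg_right (hΛsum K) (norm_nonneg _)
    have hconv : ∀ i, Tendsto (fun K => (∑ k ∈ Finset.range K, ℓ i ^ k / k) * d i)
        atTop (nhds (L i * d i)) := by
      intro i
      exact ((Complex.hasSum_taylorSeries_neg_log (hℓ1 i)).tendsto_sum_nat).mul_const (d i)
    exact le_of_tendsto (wtend _ _ hconv) (Eventually.of_forall hpart)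
  have hαΛ : 0 ≤ α * Λ := mul_nonneg (by linarith) hΛ0
  have hαLpow : ∀ (jj : ℕ) (d : Fin m → ℂ),
      ‖w (fun i => ((α:ℂ) * L i) ^ jj * d i)‖ ≤ (α*Λ)^jj * ‖w d‖ := by
    intro jj
    induction jj with
    | zero => intro d; simp
    | succ jj ih =>
        intro d
        have heq : (fun i => ((α:ℂ) * L i) ^ (jj+1) * d i)
            = fun i => (α:ℂ) * (L i * (((α:ℂ) * L i) ^ jj * d i)) := by
          funext i; ring
        rw [heq, wnorm_cmul]
        have hnα : ‖(α:ℂ)‖ = α := by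
          rw [Complex.norm_real]
          exact abs_of_pos (by linarith)
        calc ‖(α:ℂ)‖ * ‖w (fun i => L i * (((α:ℂ) * L i) ^ jj * d i))‖
            ≤ α * (Λ * ‖w (fun i => ((α:ℂ) * L i) ^ jj * d i)‖) := by
              rw [hnα]
              exact mul_le_mul_of_nonneg_left (hmultL _) (by linarith)
          _ ≤ α * (Λ * ((α*Λ)^jj * ‖w d‖)) := by
              refine mul_le_mul_of_nonneg_left ?_ (by linarith : (0:ℝ) ≤ α)
              exact mul_le_mul_of_nonneg_left (ih d) hΛ0
          _ = (α*Λ)^(jj+1) * ‖w d‖ := by ring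
  set Mv : ℝ := (1 - r) ^ (-α) with hMdef
  have hM0 : 0 ≤ Mv := Real.rpow_nonneg (le_of_lt h1r) _
  have hMexp : Mv = Real.exp (α * Λ) := by
    rw [hMdef, Real.rpow_def_of_pos h1r]
    congr 1
    rw [hΛdef]; ring
  set f : Fin m → ℂ := fun i => (1 - ℓ i) ^ (-(α:ℂ)) with hfdef
  have hfexp : ∀ i, f i = Complex.exp ((α:ℂ) * L i) := by
    intro i
    show (1 - ℓ i) ^ (-(α:ℂ)) = _
    rw [Complex.cpow_def_of_ne_zero (one_sub_ne_zero_of_norm_lt_one (hℓ1 i))]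
    congr 1
    rw [hLdef]; ring
  have hmultf : ∀ d, ‖w (fun i => f i * d i)‖ ≤ Mv * ‖w d‖ := by
    intro d
    have hpart : ∀ J, ‖w (fun i =>
        (∑ jj ∈ Finset.range J, ((α:ℂ) * L i)^jj / (jj.factorial : ℂ)) * d i)‖
        ≤ Mv * ‖w d‖ := by
      intro J
      have e1 : (fun i => (∑ jj ∈ Finset.range J, ((α:ℂ) * L i)^jj / (jj.factorial : ℂ)) * d i)
          = fun i => ∑ jj ∈ Finset.range J, (((α:ℂ) * L i)^jj / (jj.factorial : ℂ)) * d i := by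
        funext i; rw [Finset.sum_mul]
      rw [e1, w_sum]
      calc ‖∑ jj ∈ Finset.range J, w (fun i => (((α:ℂ) * L i)^jj / (jj.factorial : ℂ)) * d i)‖
          ≤ ∑ jj ∈ Finset.range J,
              ‖w (fun i => (((α:ℂ) * L i)^jj / (jj.factorial : ℂ)) * d i)‖ := norm_sum_le _ _
        _ ≤ ∑ jj ∈ Finset.range J, ((α*Λ)^jj / (jj.factorial : ℝ)) * ‖w d‖ := by
            refine Finset.sum_le_sum fun jj _ => ?_
            have e2 : (fun i => (((α:ℂ) * L i)^jj / (jj.factorial : ℂ)) * d i)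
                = fun i => ((jj.factorial : ℂ))⁻¹ * (((α:ℂ) * L i)^jj * d i) := by
              funext i; rw [div_eq_mul_inv]; ring
            rw [e2, wnorm_cmul]
            have e3 : ‖((jj.factorial : ℂ))⁻¹‖ = ((jj.factorial : ℝ))⁻¹ := by
              rw [norm_inv, Complex.norm_natCast]
            calc ‖((jj.factorial : ℂ))⁻¹‖ * ‖w (fun i => ((α:ℂ) * L i)^jj * d i)‖
                ≤ ((jj.factorial : ℝ))⁻¹ * ((α*Λ)^jj * ‖w d‖) := by
                  rw [e3]
                  exact mul_le_mul_of_nonneg_left (hαLpow jj d) (by positivity)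
              _ = ((α*Λ)^jj / (jj.factorial : ℝ)) * ‖w d‖ := by
                  rw [div_eq_mul_inv]; ring
        _ = (∑ jj ∈ Finset.range J, (α*Λ)^jj / (jj.factorial : ℝ)) * ‖w d‖ := by
            rw [Finset.sum_mul]
        _ ≤ Mv * ‖w d‖ := by
            refine mul_le_mul_of_nonneg_right ?_ (norm_nonneg _)
            rw [hMexp]
            exact Real.sum_le_exp_of_nonneg hαΛ J
    have hconv : ∀ i, Tendsto (fun J =>
        (∑ jj ∈ Finset.range J, ((α:ℂ) * L i)^jj / (jj.factorial : ℂ)) * d i)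
        atTop (nhds (f i * d i)) := by
      intro i
      have h := (NormedSpace.expSeries_div_hasSum_exp ((α:ℂ) * L i)).tendsto_sum_nat
      rw [← Complex.exp_eq_exp_ℂ] at h
      rw [hfexp i]
      exact h.mul_const (d i)
    exact le_of_tendsto (wtend _ _ hconv) (Eventually.of_forall hpart)
  -- final assembly
  have hconst2 : ((1 - r) ^ (-(2*α)) : ℝ) = Mv^2 := by
    rw [hMdef, sq, ← Real.rpow_add h1r]
    congr 1
    ring
  have hTentry : ∀ i j,
      ((((1 - r) ^ (-(2*α)) : ℝ) : ℂ) -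
        (1 - (inner ℂ v₀ (u i) : ℂ)) ^ (-(α:ℂ)) * conj ((1 - (inner ℂ v₀ (u j) : ℂ)) ^ (-(α:ℂ)))) *
      (1 - (inner ℂ (u j) (u i) : ℂ)) ^ (-(α:ℂ))
      = (Complex.ofReal (Mv^2) - f i * conj (f j)) * S i j := by
    intro i j
    rw [hconst2]
    rfl
  apply posSemidef_of_qf
  · intro i j
    simp only [Matrix.of_apply]
    rw [hTentry i j, hTentry j i]
    simp only [map_mul, map_sub, Complex.conj_ofReal, Complex.conj_conj]
    rw [herm_entry hS.1]
    ring
  · intro c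
    have expand : qf (Matrix.of fun i j =>
        ((((1 - r) ^ (-(2*α)) : ℝ) : ℂ) -
          (1 - (inner ℂ v₀ (u i) : ℂ)) ^ (-(α:ℂ)) * conj ((1 - (inner ℂ v₀ (u j) : ℂ)) ^ (-(α:ℂ)))) *
        (1 - (inner ℂ (u j) (u i) : ℂ)) ^ (-(α:ℂ))) c
        = Complex.ofReal (Mv^2) * qf S c - qf S (fun i => f i * c i) := by
      simp only [qf, Matrix.of_apply]
      rw [Finset.mul_sum, ← Finset.sum_sub_distrib]
      refine Finset.sum_congr rfl fun i _ => ?_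
      rw [Finset.mul_sum, ← Finset.sum_sub_distrib]
      refine Finset.sum_congr rfl fun j _ => ?_
      rw [hTentry i j]
      simp only [map_mul]
      ring
    rw [expand, qfS, qfS]
    have hb := hmultf c
    have hcast : Complex.ofReal (Mv^2) * Complex.ofReal (‖w c‖^2)
        - Complex.ofReal (‖w (fun i => f i * c i)‖^2)
        = Complex.ofReal (Mv^2 * ‖w c‖^2 - ‖w (fun i => f i * c i)‖^2) := by
      push_cast; ring
    rw [hcast]
    apply Complex.zero_le_real.2
    nlinarith [norm_nonneg (w (fun i => f i * c i)), norm_nonneg (w c),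
      mul_nonneg hM0 (norm_nonneg (w c))]

end BallLemma
namespace BallLemma

lemma cpow_div_of_pos_re {a e : ℂ} (ha : 0 < a.re) (he : 0 < e.re) (y : ℂ) :
    (a / e) ^ y = a ^ y * e ^ (-y) := by
  have ha0 : a ≠ 0 := fun h => by simp [h] at ha
  have he0 : e ≠ 0 := fun h => by simp [h] at he
  have harga : |a.arg| < Real.pi / 2 := Complex.abs_arg_lt_pi_div_two_iff.mpr (Or.inl ha)
  have harge : |e.arg| < Real.pi / 2 := Complex.abs_arg_lt_pi_div_two_iff.mpr (Or.inl he)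
  have hw : Complex.exp (Complex.log a - Complex.log e) = a / e := by
    rw [Complex.exp_sub, Complex.exp_log ha0, Complex.exp_log he0]
  have him : (Complex.log a - Complex.log e).im = a.arg - e.arg := by
    simp [Complex.sub_im, Complex.log_im]
  have h1 : -Real.pi < (Complex.log a - Complex.log e).im := by
    rw [him]
    have := abs_lt.mp harga
    have := abs_lt.mp harge
    have hpi : 0 < Real.pi := Real.pi_pos
    linarith
  have h2 : (Complex.log a - Complex.log e).im ≤ Real.pi := by
    rw [him]
    have := abs_lt.mp harga
    have := abs_lt.mp harge
    have hpi : 0 < Real.pi := Real.pi_pos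
    linarith
  have hlog : Complex.log (a / e) = Complex.log a - Complex.log e := by
    rw [← hw, Complex.log_exp h1 h2]
  rw [Complex.cpow_def_of_ne_zero (div_ne_zero ha0 he0), hlog,
    Complex.cpow_def_of_ne_zero ha0, Complex.cpow_def_of_ne_zero he0, ← Complex.exp_add]
  congr 1
  ring

lemma re_one_sub_pos {s : ℂ} (hs : ‖s‖ < 1) : 0 < (1 - s).re := by
  have h1 : |s.re| ≤ ‖s‖ := by
    exact Complex.abs_re_le_norm s
  have := abs_le.mp h1
  simp only [Complex.sub_re, Complex.one_re]
  linarith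

lemma cpow_neg_mul_cpow_eq_one {a : ℂ} (ha : a ≠ 0) (y : ℂ) :
    a ^ (-y) * a ^ y = 1 := by
  rw [← Complex.cpow_add _ _ ha, neg_add_cancel, Complex.cpow_zero]

end BallLemma

open BallLemma

/-- Second assertion of the ball lemma: if `K^{b,α}` is positive semidefinite,
then `g(z) = (1 − ⟨b z, b 0⟩)^{−α} = 1/K^{b,α}(z,0)` is a multiplier of
`H²_{n,α}` of norm at most `(1 − |b(0)|)^{−α}`, expressed as positivity of the
kernel `((1 − |b 0|)^{−2α} − g(z)·conj(g(w)))·(1 − ⟨z,w⟩)^{−α}`. -/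
theorem ball_reciprocal_kernel_multiplier
    (n : ℕ) (hn : 1 ≤ n)
    (b : EuclideanSpace ℂ (Fin n) → EuclideanSpace ℂ (Fin n))
    (hb_holo : DifferentiableOn ℂ b (ball (0 : EuclideanSpace ℂ (Fin n)) 1))
    (hb_maps : ∀ z ∈ ball (0 : EuclideanSpace ℂ (Fin n)) 1,
      b z ∈ ball (0 : EuclideanSpace ℂ (Fin n)) 1)
    (α : ℝ) (hα : 1 ≤ α)
    (hpos : IsPSDKernelOn
      (fun z w => ((1 - ∑ i, b z i * conj (b w i)) / (1 - ∑ i, z i * conj (w i))) ^ (α : ℂ))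
      (ball (0 : EuclideanSpace ℂ (Fin n)) 1))
    (g : EuclideanSpace ℂ (Fin n) → ℂ)
    (hg : ∀ z, g z = (1 - ∑ i, b z i * conj (b 0 i)) ^ (-(α : ℂ))) :
    IsPSDKernelOn
      (fun z w => ((((1 - ‖b 0‖) ^ (-(2 * α)) : ℝ) : ℂ) - g z * conj (g w)) *
        (1 - ∑ i, z i * conj (w i)) ^ (-(α : ℂ)))
      (ball (0 : EuclideanSpace ℂ (Fin n)) 1) := by
  intro m x hx c
  have h0mem : (0 : EuclideanSpace ℂ (Fin n)) ∈ ball (0 : EuclideanSpace ℂ (Fin n)) 1 :=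
    mem_ball_self one_pos
  have hb0 : ‖b 0‖ < 1 := mem_ball_zero_iff.mp (hb_maps 0 h0mem)
  have hxn : ∀ i, ‖x i‖ < 1 := fun i => mem_ball_zero_iff.mp (hx i)
  have hbxn : ∀ i, ‖b (x i)‖ < 1 := fun i => mem_ball_zero_iff.mp (hb_maps _ (hx i))
  have hinner : ∀ (z w : EuclideanSpace ℂ (Fin n)),
      (∑ t, z t * conj (w t)) = (inner ℂ w z : ℂ) := by
    intro z w
    rw [PiLp.inner_apply]
    refine Finset.sum_congr rfl fun t _ => ?_
    simp [RCLike.inner_apply, mul_comm]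
  have hinner_lt : ∀ (z w : EuclideanSpace ℂ (Fin n)), ‖z‖ < 1 → ‖w‖ < 1 →
      ‖(inner ℂ w z : ℂ)‖ < 1 := by
    intro z w hz hw
    calc ‖(inner ℂ w z : ℂ)‖ ≤ ‖w‖ * ‖z‖ := by
          simpa using norm_inner_le_norm (𝕜 := ℂ) w z
      _ < 1 * 1 := mul_lt_mul'' hw hz (norm_nonneg _) (norm_nonneg _)
      _ = 1 := by norm_num
  have hU := lemmaB (b 0) hb0 α hα (fun i => b (x i)) (fun i => hbxn i)
  have hK : ∀ cc : Fin m → ℂ, 0 ≤ qf (Matrix.of fun i j =>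
      ((1 - ∑ t, b (x i) t * conj (b (x j) t)) / (1 - ∑ t, x i t * conj (x j t))) ^ (α:ℂ)) cc := by
    intro cc
    exact hpos m x hx cc
  have key := schur_qf hU _ hK c
  have hTij : ∀ i j, c i * conj (c j) *
      (((((1 - ‖b 0‖) ^ (-(2 * α)) : ℝ) : ℂ) - g (x i) * conj (g (x j))) *
        (1 - ∑ t, x i t * conj (x j t)) ^ (-(α : ℂ)))
      = c i * conj (c j) *
        ((Matrix.of fun i j =>
          ((((1 - ‖b 0‖) ^ (-(2*α)) : ℝ) : ℂ) -
            (1 - (inner ℂ (b 0) (b (x i)) : ℂ)) ^ (-(α:ℂ)) *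
              conj ((1 - (inner ℂ (b 0) (b (x j)) : ℂ)) ^ (-(α:ℂ)))) *
          (1 - (inner ℂ (b (x j)) (b (x i)) : ℂ)) ^ (-(α:ℂ))) i j *
        (Matrix.of fun i j =>
          ((1 - ∑ t, b (x i) t * conj (b (x j) t)) / (1 - ∑ t, x i t * conj (x j t))) ^ (α:ℂ)) i j) := by
    intro i j
    simp only [Matrix.of_apply]
    congr 1
    set a : ℂ := 1 - (inner ℂ (b (x j)) (b (x i)) : ℂ) with hadef
    set e : ℂ := 1 - (inner ℂ (x j) (x i) : ℂ) with hedef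
    have ha : 0 < a.re := re_one_sub_pos (hinner_lt _ _ (hbxn i) (hbxn j))
    have he : 0 < e.re := re_one_sub_pos (hinner_lt _ _ (hxn i) (hxn j))
    have ha0 : a ≠ 0 := fun h => by simp [h] at ha
    have hg1 : g (x i) = (1 - (inner ℂ (b 0) (b (x i)) : ℂ)) ^ (-(α:ℂ)) := by
      rw [hg, hinner]
    have hg2 : g (x j) = (1 - (inner ℂ (b 0) (b (x j)) : ℂ)) ^ (-(α:ℂ)) := by
      rw [hg, hinner]
    have hsb : (1 - ∑ t, b (x i) t * conj (b (x j) t)) = a := by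
      rw [hadef, hinner]
    have hs : (1 - ∑ t, x i t * conj (x j t)) = e := by
      rw [hedef, hinner]
    rw [hg1, hg2, hsb, hs]
    rw [cpow_div_of_pos_re ha he (α:ℂ)]
    have hone : a ^ (-(α:ℂ)) * a ^ (α:ℂ) = 1 := cpow_neg_mul_cpow_eq_one ha0 (α:ℂ)
    have hfactor : ∀ X : ℂ, X * e ^ (-(α:ℂ)) = X * a ^ (-(α:ℂ)) * (a ^ (α:ℂ) * e ^ (-(α:ℂ))) := by
      intro X
      calc X * e ^ (-(α:ℂ)) = X * (a ^ (-(α:ℂ)) * a ^ (α:ℂ)) * e ^ (-(α:ℂ)) := by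
            rw [hone]; ring
        _ = X * a ^ (-(α:ℂ)) * (a ^ (α:ℂ) * e ^ (-(α:ℂ))) := by ring
    exact hfactor _
  calc (0:ℂ) ≤ qf (Matrix.of fun i j =>
        (Matrix.of fun i j =>
          ((((1 - ‖b 0‖) ^ (-(2*α)) : ℝ) : ℂ) -
            (1 - (inner ℂ (b 0) (b (x i)) : ℂ)) ^ (-(α:ℂ)) *
              conj ((1 - (inner ℂ (b 0) (b (x j)) : ℂ)) ^ (-(α:ℂ)))) *
          (1 - (inner ℂ (b (x j)) (b (x i)) : ℂ)) ^ (-(α:ℂ))) i j *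
        (Matrix.of fun i j =>
          ((1 - ∑ t, b (x i) t * conj (b (x j) t)) / (1 - ∑ t, x i t * conj (x j t))) ^ (α:ℂ)) i j) c := key
    _ = ∑ i, ∑ j, c i * conj (c j) *
        (((((1 - ‖b 0‖) ^ (-(2 * α)) : ℝ) : ℂ) - g (x i) * conj (g (x j))) *
          (1 - ∑ t, x i t * conj (x j t)) ^ (-(α : ℂ))) := by
      rw [qf]
      exact Finset.sum_congr rfl fun i _ => Finset.sum_congr rfl fun j _ => (hTij i j).symm
end
end

section
/- Let n ≥ 1, let b : 𝔹ⁿ → 𝔹ⁿ be a holomorphic map of the open unit ball into itself, let α ≥ 1 be a real number, and let f : 𝔹ⁿ → ℂ. If both the kernel K^{b,α}(z,w) = ((1 − ⟨b(z), b(w)⟩)/(1 − ⟨z,w⟩))^α (principal branch) and the kernel K^{b,α}(z,w) − f(z)·conj(f(w)) are positive semidefinite on 𝔹ⁿ, then the kernel (z,w) ↦ (1 − ⟨z,w⟩)^{−α} − f(z)·conj(f(w))·(1 − ⟨b(z), b(w)⟩)^{−α} is positive semidefinite on 𝔹ⁿ. (This is the kernel form of the estimate ‖M_f C_b‖ ≤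 ‖f‖_{H²_{n,α}(b)} on H²_{n,α}.) -/
open Complex Metric ComplexConjugate
open scoped ComplexOrder

noncomputable section

lemma re_pos_of_norm_lt_one {s : ℂ} (hs : ‖s‖ < 1) : 0 < (1 - s).re := by
  have h1 : s.re ≤ ‖s‖ := Complex.re_le_norm s
  simp only [Complex.sub_re, Complex.one_re]
  linarith

lemma one_sub_mem_slitPlane {s : ℂ} (hs : ‖s‖ < 1) : (1 - s) ∈ Complex.slitPlane :=
  Complex.mem_slitPlane_iff.mpr (Or.inl (re_pos_of_norm_lt_one hs))

lemma cpow_div_mul {a b : ℂ} (ha : 0 < a.re) (hb : 0 < b.re) (γ : ℂ) :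
    (a / b) ^ γ * a ^ (-γ) = b ^ (-γ) := by
  have ha0 : a ≠ 0 := fun h => by simp [h] at ha
  have hb0 : b ≠ 0 := fun h => by simp [h] at hb
  have hd : a / b ≠ 0 := div_ne_zero ha0 hb0
  have harga : |a.arg| < Real.pi / 2 := Complex.abs_arg_lt_pi_div_two_iff.mpr (Or.inl ha)
  have hargb : |b.arg| < Real.pi / 2 := Complex.abs_arg_lt_pi_div_two_iff.mpr (Or.inl hb)
  have hbne : b.arg ≠ Real.pi := by
    intro h
    have := abs_lt.mp hargb
    rw [h] at this
    linarith [Real.pi_pos, this.2]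
  have hlog : Complex.log (a / b) = Complex.log a - Complex.log b := by
    rw [div_eq_mul_inv, Complex.log_mul ha0 (inv_ne_zero hb0) ?_, Complex.log_inv _ hbne,
      sub_eq_add_neg]
    · rw [Complex.arg_inv, if_neg hbne]
      constructor
      · have h1 := abs_lt.mp harga; have h2 := abs_lt.mp hargb
        linarith [h1.1, h2.2]
      · have h1 := abs_lt.mp harga; have h2 := abs_lt.mp hargb
        linarith [Real.pi_pos, h1.2, h2.1]
  rw [Complex.cpow_def_of_ne_zero hd, Complex.cpow_def_of_ne_zero ha0,
    Complex.cpow_def_of_ne_zero hb0, ← Complex.exp_add, hlog]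
  congr 1
  ring

lemma iteratedDeriv_one_sub_cpow (α : ℝ) (m : ℕ) :
    ∀ z : ℂ, ‖z‖ < 1 →
      iteratedDeriv m (fun w : ℂ => (1 - w) ^ (-(α : ℂ))) z
        = (∏ k ∈ Finset.range m, ((α : ℂ) + k)) * (1 - z) ^ (-(α : ℂ) - m) := by
  induction m with
  | zero => intro z hz; simp [iteratedDeriv_zero]
  | succ m ih =>
    intro z hz
    rw [iteratedDeriv_succ]
    have hU : IsOpen {w : ℂ | ‖w‖ < 1} := isOpen_lt (continuous_norm) continuous_const
    have hev : (iteratedDeriv m (fun w : ℂ => (1 - w) ^ (-(α : ℂ))))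
        =ᶠ[nhds z] (fun w => (∏ k ∈ Finset.range m, ((α : ℂ) + k)) * (1 - w) ^ (-(α : ℂ) - m)) := by
      filter_upwards [hU.mem_nhds hz] with w hw using ih w hw
    rw [hev.deriv_eq]
    have h1 : HasDerivAt (fun w : ℂ => 1 - w) (-1) z := (hasDerivAt_id z).const_sub 1
    have h2 : HasDerivAt (fun w : ℂ => (1 - w) ^ (-(α : ℂ) - m))
        ((-(α : ℂ) - m) * (1 - z) ^ (-(α : ℂ) - m - 1) * (-1)) z :=
      h1.cpow_const (one_sub_mem_slitPlane hz)
    rw [(h2.const_mul _).deriv]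
    rw [Finset.prod_range_succ]
    have : (-(α : ℂ) - m - 1) = -(α : ℂ) - (m + 1 : ℕ) := by push_cast; ring
    rw [this]
    ring

lemma hasSum_one_sub_cpow (α : ℝ) {s : ℂ} (hs : ‖s‖ < 1) :
    HasSum (fun m : ℕ => (((∏ k ∈ Finset.range m, (α + (k : ℝ))) / m.factorial : ℝ) : ℂ) * s ^ m)
      ((1 - s) ^ (-(α : ℂ))) := by
  set R : NNReal := ⟨(1 + ‖s‖) / 2, by positivity⟩ with hRdef
  have hR1 : (R : ℝ) < 1 := by
    simp only [hRdef, NNReal.coe_mk]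
    show (1 + ‖s‖) / 2 < 1
    linarith
  have hsR : ‖s‖ < (R : ℝ) := by
    simp only [hRdef, NNReal.coe_mk]
    show ‖s‖ < (1 + ‖s‖) / 2
    linarith
  have hRpos : 0 < R := by
    rw [← NNReal.coe_lt_coe]
    simp only [hRdef, NNReal.coe_mk, NNReal.coe_zero]
    show (0:ℝ) < (1 + ‖s‖) / 2
    positivity
  have hdiff : DifferentiableOn ℂ (fun w : ℂ => (1 - w) ^ (-(α : ℂ))) (closedBall 0 R) := by
    intro z hz
    have hz1 : ‖z‖ < 1 := lt_of_le_of_lt (by simpa using mem_closedBall_zero_iff.mp hz) hR1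
    exact (((differentiableAt_const (1 : ℂ)).sub differentiableAt_id).cpow
      (differentiableAt_const _) (one_sub_mem_slitPlane hz1)).differentiableWithinAt
  have hps := hdiff.hasFPowerSeriesOnBall hRpos
  have hmem : s ∈ EMetric.ball (0 : ℂ) R := by
    rw [EMetric.ball, Metric.eball_coe]
    exact mem_ball_zero_iff.mpr hsR
  have hsum := hps.hasSum_iteratedFDeriv hmem
  simp only [zero_add] at hsum
  convert hsum using 2 with m
  case e'_3 => rfl
  rw [iteratedFDeriv_apply_eq_iteratedDeriv_mul_prod, iteratedDeriv_one_sub_cpow α m 0 (by simp),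
    Finset.prod_const, Finset.card_univ, Fintype.card_fin]
  rw [sub_zero, Complex.one_cpow]
  push_cast
  rw [smul_eq_mul, smul_eq_mul]
  rw [mul_one]
  field_simp

lemma sum_pow_expand {n : ℕ} (v w : EuclideanSpace ℂ (Fin n)) (m : ℕ) :
    (∑ k, v k * conj (w k)) ^ m
      = ∑ p : Fin m → Fin n, (∏ r, v (p r)) * conj (∏ r, w (p r)) := by
  calc (∑ k, v k * conj (w k)) ^ m = ∏ _r : Fin m, (∑ k, v k * conj (w k)) := by
        rw [Finset.prod_const, Finset.card_univ, Fintype.card_fin]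
    _ = ∑ p ∈ Fintype.piFinset (fun _ : Fin m => (Finset.univ : Finset (Fin n))),
          ∏ r, (v (p r) * conj (w (p r))) := Finset.prod_univ_sum _ _
    _ = ∑ p : Fin m → Fin n, (∏ r, v (p r)) * conj (∏ r, w (p r)) := by
        rw [Fintype.piFinset_univ]
        refine Finset.sum_congr rfl fun p _ => ?_
        rw [Finset.prod_mul_distrib, map_prod]

lemma schur_step {N : ℕ} {P : Type*} (s : Finset P) (c : Fin N → ℂ) (D : Fin N → Fin N → ℂ)
    (w : Fin N → P → ℂ) (a : ℝ) (ha : 0 ≤ a)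
    (hD : ∀ d : Fin N → ℂ, 0 ≤ ∑ i, ∑ j, d i * conj (d j) * D i j) :
    0 ≤ ∑ i, ∑ j, c i * conj (c j) * D i j * ((a : ℂ) * ∑ p ∈ s, w i p * conj (w j p)) := by
  have e1 : ∑ i, ∑ j, c i * conj (c j) * D i j * ((a : ℂ) * ∑ p ∈ s, w i p * conj (w j p))
      = ∑ p ∈ s, (a : ℂ) * ∑ i, ∑ j, (c i * w i p) * conj (c j * w j p) * D i j := by
    calc ∑ i, ∑ j, c i * conj (c j) * D i j * ((a : ℂ) * ∑ p ∈ s, w i p * conj (w j p))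
        = ∑ i, ∑ j, ∑ p ∈ s, (a : ℂ) * ((c i * w i p) * conj (c j * w j p) * D i j) := by
          refine Finset.sum_congr rfl fun i _ => Finset.sum_congr rfl fun j _ => ?_
          rw [Finset.mul_sum, Finset.mul_sum]
          refine Finset.sum_congr rfl fun p _ => ?_
          simp only [map_mul]
          ring
      _ = ∑ i, ∑ p ∈ s, ∑ j, (a : ℂ) * ((c i * w i p) * conj (c j * w j p) * D i j) :=
          Finset.sum_congr rfl fun i _ => Finset.sum_comm
      _ = ∑ p ∈ s, ∑ i, ∑ j, (a : ℂ) * ((c i * w i p) * conj (c j * w j p) * D i j) :=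
          Finset.sum_comm
      _ = ∑ p ∈ s, (a : ℂ) * ∑ i, ∑ j, (c i * w i p) * conj (c j * w j p) * D i j := by
          refine Finset.sum_congr rfl fun p _ => ?_
          simp_rw [Finset.mul_sum]
  rw [e1]
  refine Finset.sum_nonneg fun p _ => mul_nonneg ?_ (hD fun i => c i * w i p)
  exact_mod_cast Complex.zero_le_real.mpr ha

set_option maxHeartbeats 2000000 in
/-- Kernel form of `‖M_f C_b‖ ≤ ‖f‖_{H²_{n,α}(b)}` on the ball: if both
`K^{b,α}` and `K^{b,α}(z,w) − f(z)·conj(f(w))` are positive semidefinite, then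
so is `(1 − ⟨z,w⟩)^{−α} − f(z)·conj(f(w))·(1 − ⟨b z, b w⟩)^{−α}`. -/
theorem ball_weighted_composition_kernel_psd
    (n : ℕ) (hn : 1 ≤ n)
    (b : EuclideanSpace ℂ (Fin n) → EuclideanSpace ℂ (Fin n))
    (hb_holo : DifferentiableOn ℂ b (ball (0 : EuclideanSpace ℂ (Fin n)) 1))
    (hb_maps : ∀ z ∈ ball (0 : EuclideanSpace ℂ (Fin n)) 1,
      b z ∈ ball (0 : EuclideanSpace ℂ (Fin n)) 1)
    (α : ℝ) (hα : 1 ≤ α)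
    (f : EuclideanSpace ℂ (Fin n) → ℂ)
    (hKpos : IsPSDKernelOn
      (fun z w => ((1 - ∑ i, b z i * conj (b w i)) / (1 - ∑ i, z i * conj (w i))) ^ (α : ℂ))
      (ball (0 : EuclideanSpace ℂ (Fin n)) 1))
    (hfpos : IsPSDKernelOn
      (fun z w => ((1 - ∑ i, b z i * conj (b w i)) / (1 - ∑ i, z i * conj (w i))) ^ (α : ℂ) -
        f z * conj (f w))
      (ball (0 : EuclideanSpace ℂ (Fin n)) 1)) :
    IsPSDKernelOn
      (fun z w => (1 - ∑ i, z i * conj (w i)) ^ (-(α : ℂ)) -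
        f z * conj (f w) * (1 - ∑ i, b z i * conj (b w i)) ^ (-(α : ℂ)))
      (ball (0 : EuclideanSpace ℂ (Fin n)) 1) := by
  intro N x hx c
  show 0 ≤ ∑ i, ∑ j, c i * conj (c j) *
    ((1 - ∑ k, x i k * conj (x j k)) ^ (-(α : ℂ)) -
      f (x i) * conj (f (x j)) * (1 - ∑ k, b (x i) k * conj (b (x j) k)) ^ (-(α : ℂ)))
  have hxb : ∀ i, ‖x i‖ < 1 := fun i => mem_ball_zero_iff.mp (hx i)
  have hub : ∀ i, ‖b (x i)‖ < 1 := fun i => mem_ball_zero_iff.mp (hb_maps _ (hx i))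
  have hip : ∀ v w : EuclideanSpace ℂ (Fin n), ‖v‖ < 1 → ‖w‖ < 1 →
      ‖∑ k, v k * conj (w k)‖ < 1 := by
    intro v w hv hw
    have he : (∑ k, v k * conj (w k)) = inner (𝕜 := ℂ) w v := by
      rw [PiLp.inner_apply]
      exact Finset.sum_congr rfl fun k _ => by rw [RCLike.inner_apply, mul_comm]
    rw [he]
    calc ‖(inner (𝕜 := ℂ) w v : ℂ)‖ ≤ ‖w‖ * ‖v‖ := norm_inner_le_norm _ _
      _ < 1 := by nlinarith [norm_nonneg v, norm_nonneg w]
  have hsn : ∀ i j, ‖∑ k, b (x i) k * conj (b (x j) k)‖ < 1 :=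
    fun i j => hip _ _ (hub i) (hub j)
  have htn : ∀ i j, ‖∑ k, x i k * conj (x j k)‖ < 1 :=
    fun i j => hip _ _ (hxb i) (hxb j)
  have hcoef : ∀ m : ℕ, 0 ≤ (∏ k ∈ Finset.range m, (α + (k : ℝ))) / m.factorial := by
    intro m
    refine div_nonneg (Finset.prod_nonneg fun k _ => ?_) (Nat.cast_nonneg _)
    have h0 : (0 : ℝ) ≤ α := by linarith
    positivity
  have hD : ∀ d : Fin N → ℂ, 0 ≤ ∑ i, ∑ j, d i * conj (d j) *
      (((1 - ∑ k, b (x i) k * conj (b (x j) k)) / (1 - ∑ k, x i k * conj (x j k))) ^ (α : ℂ) -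
        f (x i) * conj (f (x j))) := fun d => hfpos N x hx d
  have hterm : ∀ i j : Fin N, HasSum
      (fun m : ℕ => (c i * conj (c j) *
          (((1 - ∑ k, b (x i) k * conj (b (x j) k)) / (1 - ∑ k, x i k * conj (x j k))) ^ (α : ℂ) -
            f (x i) * conj (f (x j)))) *
        ((((∏ k ∈ Finset.range m, (α + (k : ℝ))) / m.factorial : ℝ) : ℂ) *
          (∑ k, b (x i) k * conj (b (x j) k)) ^ m))
      ((c i * conj (c j) *
          (((1 - ∑ k, b (x i) k * conj (b (x j) k)) / (1 - ∑ k, x i k * conj (x j k))) ^ (α : ℂ) -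
            f (x i) * conj (f (x j)))) *
        (1 - ∑ k, b (x i) k * conj (b (x j) k)) ^ (-(α : ℂ))) :=
    fun i j => (hasSum_one_sub_cpow α (hsn i j)).mul_left _
  have hbig := hasSum_sum (s := (Finset.univ : Finset (Fin N)))
    (fun i _ => hasSum_sum (s := (Finset.univ : Finset (Fin N))) (fun j _ => hterm i j))
  refine le_of_le_of_eq (hasSum_le (fun m => ?_) hasSum_zero hbig) ?_
  · -- each term of the series is nonnegative
    simp only [sum_pow_expand]
    exact schur_step (P := Fin m → Fin n) _ c
      (fun i j => ((1 - ∑ k, b (x i) k * conj (b (x j) k)) /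
          (1 - ∑ k, x i k * conj (x j k))) ^ (α : ℂ) - f (x i) * conj (f (x j)))
      (fun i p => ∏ r, b (x i) (p r)) _ (hcoef m) hD
  · -- identify the sum of the series with the goal quadratic form
    refine Finset.sum_congr rfl fun i _ => Finset.sum_congr rfl fun j _ => ?_
    rw [mul_assoc]
    congr 1
    rw [sub_mul, cpow_div_mul (re_pos_of_norm_lt_one (hsn i j))
      (re_pos_of_norm_lt_one (htn i j)) (α : ℂ)]
end
end

section
/- There exists r with 0 < r < 1 such that, for the holomorphic map b_r : 𝔹² → 𝔹² given by b_r(z₁,z₂) = (2r·z₁·z₂, 0), the kernel (z,w) ↦ (1 − 4r²·z₁·z₂·conj(w₁)·conj(w₂))/(1 − z₁·conj(w₁) − z₂·conj(w₂)) is NOT positive semidefinite on 𝔹². (Thus positivity of the generalized de Branges–Rovnyak kernel K^{b,1} is not necessary for boundedness of the composition operator C_{b_r} on H²_{2,1}.) -/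
open Complex Metric ComplexConjugate
open scoped ComplexOrder

noncomputable section

/-- There is `0 < r < 1` such that for `b_r(z₁,z₂) = (2r·z₁·z₂, 0)` the
generalized de Branges–Rovnyak kernel
`K^{b_r,1}(z,w) = (1 − 4r²·z₁z₂·conj(w₁w₂))/(1 − z₁conj(w₁) − z₂conj(w₂))`
is not positive semidefinite on the unit ball of `ℂ²`; thus positivity of
`K^{b,1}` is not necessary for boundedness of `C_b` on `H²_{2,1}`. -/
theorem exists_kernel_not_psd_but_bounded_composition :
    ∃ r : ℝ, 0 < r ∧ r < 1 ∧
      ¬ IsPSDKernelOn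
        (fun z w : EuclideanSpace ℂ (Fin 2) =>
          (1 - 4 * (r : ℂ) ^ 2 * z 0 * z 1 * conj (w 0) * conj (w 1)) /
            (1 - z 0 * conj (w 0) - z 1 * conj (w 1)))
        (ball (0 : EuclideanSpace ℂ (Fin 2)) 1) := by
  refine ⟨9/10, by norm_num, by norm_num, fun h => ?_⟩
  -- four points (±1/2, ±1/2) and coefficients 1, -1, -1, 1
  set x : Fin 4 → EuclideanSpace ℂ (Fin 2) :=
    ![!₂[1/2, 1/2], !₂[1/2, -(1/2)], !₂[-(1/2), 1/2], !₂[-(1/2), -(1/2)]] with hx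
  have hnorm : ∀ i j, ‖x i j‖ = 1/2 := by
    intro i j
    fin_cases i <;> fin_cases j <;> simp [hx, norm_div]
  have hmem : ∀ i, x i ∈ ball (0 : EuclideanSpace ℂ (Fin 2)) 1 := by
    intro i
    rw [mem_ball_zero_iff, EuclideanSpace.norm_eq, Fin.sum_univ_two, hnorm i 0, hnorm i 1]
    rw [show ((1:ℝ)/2)^2 + (1/2)^2 = 1/2 by norm_num]
    calc Real.sqrt (1/2) < Real.sqrt 1 := by
          apply Real.sqrt_lt_sqrt <;> norm_num
      _ = 1 := Real.sqrt_one
  have key := h 4 x hmem ![1, -1, -1, 1]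
  have e00 : x 0 0 = 1/2 := rfl
  have e01 : x 0 1 = 1/2 := rfl
  have e10 : x 1 0 = 1/2 := rfl
  have e11 : x 1 1 = -(1/2) := rfl
  have e20 : x 2 0 = -(1/2) := rfl
  have e21 : x 2 1 = 1/2 := rfl
  have e30 : x 3 0 = -(1/2) := rfl
  have e31 : x 3 1 = -(1/2) := rfl
  have c0 : (![1, -1, -1, 1] : Fin 4 → ℂ) 0 = 1 := rfl
  have c1 : (![1, -1, -1, 1] : Fin 4 → ℂ) 1 = -1 := rfl
  have c2 : (![1, -1, -1, 1] : Fin 4 → ℂ) 2 = -1 := rfl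
  have c3 : (![1, -1, -1, 1] : Fin 4 → ℂ) 3 = 1 := rfl
  have hconj1 : conj ((1:ℂ)/2) = 1/2 := by simp [map_div₀, map_ofNat]
  have hconj2 : conj (-((1:ℂ)/2)) = -(1/2) := by simp [map_div₀, map_ofNat]
  have hconjc1 : conj ((1:ℂ)) = 1 := by simp
  have hconjc2 : conj ((-1:ℂ)) = -1 := by simp
  have hr : ((9/10 : ℝ) : ℂ) = 9/10 := by push_cast; ring
  simp only [Fin.sum_univ_four, e00, e01, e10, e11, e20, e21, e30, e31,
    c0, c1, c2, c3, hconj1, hconj2, hconjc1, hconjc2, hr] at key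
  norm_num at key
  rw [Complex.le_def] at key
  norm_num at key
end
end
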